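/- arXiv:2201.02346 — 14 statements merged into one kernel-verified Lean document; each statement's English description precedes it below -/
import Mathlib

section
/- Let S be a semigroup. The intersection ideal graph Γ(S) is disconnected if and only if S contains at least two minimal left ideals and every nontrivial left ideal of S is both a minimal left ideal and a maximal left ideal of S. -/
/-- `I` is a left ideal of the semigroup `S`: a nonempty subset closed under
left multiplication by arbitrary elements of `S`. -/
def IsLeftIdeal (S : Type*) [Semigroup S] (I : Set S) : Prop :=
  I.Nonempty ∧ ∀ s : S, ∀ x ∈ I, s * x ∈ I

/-- `I` is a nontrivial left ideal of `S`: a left ideal with `I ≠ S`. -/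
def IsNontrivialLeftIdeal (S : Type*) [Semigroup S] (I : Set S) : Prop :=
  IsLeftIdeal S I ∧ I ≠ Set.univ

/-- `I` is a minimal left ideal of `S`: a nontrivial left ideal properly
containing no left ideal of `S`. -/
def IsMinimalLeftIdeal (S : Type*) [Semigroup S] (I : Set S) : Prop :=
  IsNontrivialLeftIdeal S I ∧ ∀ J : Set S, IsLeftIdeal S J → ¬ J ⊂ I

/-- `I` is a maximal left ideal of `S`: a nontrivial left ideal not properly
contained in any nontrivial left ideal of `S`. -/
def IsMaximalLeftIdeal (S : Type*) [Semigroup S] (I : Set S) : Prop :=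
  IsNontrivialLeftIdeal S I ∧ ∀ J : Set S, IsNontrivialLeftIdeal S J → ¬ I ⊂ J

/-- The intersection ideal graph `Γ(S)`: vertices are the nontrivial left ideals of `S`,
two distinct vertices being adjacent iff their intersection is nonempty. -/
def idealGraph (S : Type*) [Semigroup S] :
    SimpleGraph {I : Set S // IsNontrivialLeftIdeal S I} where
  Adj I J := I ≠ J ∧ (I.1 ∩ J.1).Nonempty
  symm := by
    constructor
    rintro I J ⟨h1, h2⟩
    exact ⟨h1.symm, by rwa [Set.inter_comm]⟩
  loopless := by constructor; rintro I ⟨h1, -⟩; exact h1 rfl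

private lemma union_ideal {S : Type*} [Semigroup S] {I J : Set S}
    (hI : IsLeftIdeal S I) (hJ : IsLeftIdeal S J) : IsLeftIdeal S (I ∪ J) :=
  ⟨hI.1.mono Set.subset_union_left, fun s x hx =>
    hx.elim (fun h => Or.inl (hI.2 s x h)) (fun h => Or.inr (hJ.2 s x h))⟩

private lemma reach_of_inter {S : Type*} [Semigroup S]
    (A B : {I : Set S // IsNontrivialLeftIdeal S I})
    (h : (A.1 ∩ B.1).Nonempty) : (idealGraph S).Reachable A B := by
  rcases eq_or_ne A B with rfl | hne
  · exact SimpleGraph.Reachable.refl _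
  · exact SimpleGraph.Adj.reachable ⟨hne, h⟩

private lemma key {S : Type*} [Semigroup S]
    (A B : {I : Set S // IsNontrivialLeftIdeal S I})
    (hnr : ¬ (idealGraph S).Reachable A B)
    (hdisj : A.1 ∩ B.1 = ∅)
    {K L : Set S} (hK : IsNontrivialLeftIdeal S K) (hKA : K ⊆ A.1)
    (hL : IsLeftIdeal S L) : ¬ L ⊂ K := by
  rintro hLK
  have hLA : L ⊆ A.1 := hLK.1.trans hKA
  have hLneA : L ≠ A.1 := by
    rintro rfl
    exact hLK.2 hKA
  set M : Set S := L ∪ B.1 with hM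
  have hMideal : IsLeftIdeal S M := union_ideal hL B.2.1
  have hMne : M ≠ Set.univ := by
    intro hMuniv
    apply hLneA
    refine hLA.antisymm fun x hx => ?_
    have : x ∈ M := hMuniv ▸ Set.mem_univ x
    rcases this with h | h
    · exact h
    · exact absurd (Set.mem_inter hx h) (by rw [hdisj]; exact id)
  have hMvert : IsNontrivialLeftIdeal S M := ⟨hMideal, hMne⟩
  apply hnr
  have r1 : (idealGraph S).Reachable A ⟨K, hK⟩ := by
    apply reach_of_inter
    obtain ⟨x, hx⟩ := hK.1.1
    exact ⟨x, hKA hx, hx⟩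
  have r2 : (idealGraph S).Reachable (⟨K, hK⟩ : {I : Set S // IsNontrivialLeftIdeal S I})
      ⟨M, hMvert⟩ := by
    apply reach_of_inter
    obtain ⟨x, hx⟩ := hL.1
    exact ⟨x, hLK.1 hx, Or.inl hx⟩
  have r3 : (idealGraph S).Reachable (⟨M, hMvert⟩ : {I : Set S // IsNontrivialLeftIdeal S I})
      B := by
    apply reach_of_inter
    obtain ⟨x, hx⟩ := B.2.1.1
    exact ⟨x, Or.inr hx, hx⟩
  exact (r1.trans r2).trans r3

/-- `Γ(S)` is disconnected iff `S` contains at least two minimal left ideals and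
every nontrivial left ideal of `S` is both minimal and maximal. -/
theorem idealGraph_disconnected_iff (S : Type*) [Semigroup S] :
    (Nonempty {I : Set S // IsNontrivialLeftIdeal S I} ∧ ¬ (idealGraph S).Connected) ↔
      ((∃ I J : Set S, IsMinimalLeftIdeal S I ∧ IsMinimalLeftIdeal S J ∧ I ≠ J) ∧
        ∀ I : Set S, IsNontrivialLeftIdeal S I →
          IsMinimalLeftIdeal S I ∧ IsMaximalLeftIdeal S I) := by
  constructor
  · rintro ⟨hne, hconn⟩
    rw [SimpleGraph.connected_iff] at hconn
    push_neg at hconn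
    have hpre : ¬ (idealGraph S).Preconnected := fun h => (hconn h).false hne.some
    rw [SimpleGraph.Preconnected] at hpre
    push_neg at hpre
    obtain ⟨A, B, hnr⟩ := hpre
    have hdisj : A.1 ∩ B.1 = ∅ := by
      by_contra h
      exact hnr (reach_of_inter A B (Set.nonempty_iff_ne_empty.mpr h))
    have hdisj' : B.1 ∩ A.1 = ∅ := by rw [Set.inter_comm]; exact hdisj
    have huniv : A.1 ∪ B.1 = Set.univ := by
      by_contra h
      have hMvert : IsNontrivialLeftIdeal S (A.1 ∪ B.1) :=
        ⟨union_ideal A.2.1 B.2.1, h⟩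
      apply hnr
      refine (reach_of_inter A ⟨_, hMvert⟩ ?_).trans (reach_of_inter ⟨_, hMvert⟩ B ?_)
      · obtain ⟨x, hx⟩ := A.2.1.1
        exact ⟨x, hx, Or.inl hx⟩
      · obtain ⟨x, hx⟩ := B.2.1.1
        exact ⟨x, Or.inr hx, hx⟩
    -- every nontrivial ideal is minimal
    have hmin : ∀ K : Set S, IsNontrivialLeftIdeal S K → IsMinimalLeftIdeal S K := by
      intro K hK
      have hside : K ⊆ A.1 ∨ K ⊆ B.1 := by
        by_cases hKB : (K ∩ B.1).Nonempty
        · right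
          intro x hx
          by_contra hxB
          have hxA : x ∈ A.1 := by
            have : x ∈ A.1 ∪ B.1 := huniv ▸ Set.mem_univ x
            exact this.resolve_right hxB
          have rA : (idealGraph S).Reachable A ⟨K, hK⟩ :=
            reach_of_inter _ _ ⟨x, hxA, hx⟩
          have rB : (idealGraph S).Reachable (⟨K, hK⟩ :
              {I : Set S // IsNontrivialLeftIdeal S I}) B :=
            reach_of_inter _ _ hKB
          exact hnr (rA.trans rB)
        · left
          intro x hx
          have : x ∈ A.1 ∪ B.1 := huniv ▸ Set.mem_univ x
          refine this.resolve_right fun hxB => hKB ⟨x, hx, hxB⟩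
      refine ⟨hK, fun L hL => ?_⟩
      rcases hside with hKA | hKB
      · exact key A B hnr hdisj hK hKA hL
      · exact key B A (fun r => hnr r.symm) hdisj' hK hKB hL
    refine ⟨⟨A.1, B.1, hmin A.1 A.2, hmin B.1 B.2, ?_⟩, fun K hK => ⟨hmin K hK, hK, ?_⟩⟩
    · intro h
      obtain ⟨x, hx⟩ := A.2.1.1
      have : x ∈ A.1 ∩ B.1 := ⟨hx, h ▸ hx⟩
      rw [hdisj] at this
      exact this
    · intro M hM hKM
      exact (hmin M hM).2 K hK.1 hKM
  · rintro ⟨⟨I, J, hI, hJ, hIJ⟩, hall⟩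
    have hIv : IsNontrivialLeftIdeal S I := hI.1
    have hJv : IsNontrivialLeftIdeal S J := hJ.1
    refine ⟨⟨⟨I, hIv⟩⟩, fun hconn => ?_⟩
    -- the graph has no edges
    have noadj : ∀ A B, ¬ (idealGraph S).Adj A B := by
      rintro A B ⟨hne, x, hxA, hxB⟩
      have hint : IsLeftIdeal S (A.1 ∩ B.1) :=
        ⟨⟨x, hxA, hxB⟩, fun s y hy => ⟨A.2.1.2 s y hy.1, B.2.1.2 s y hy.2⟩⟩
      have hminA := (hall A.1 A.2).1
      have := hminA.2 (A.1 ∩ B.1) hint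
      have hsub : A.1 ∩ B.1 = A.1 := by
        by_contra h
        exact this ⟨Set.inter_subset_left, fun hs => h (Set.inter_subset_left.antisymm hs)⟩
      have hAB : A.1 ⊆ B.1 := by rw [← hsub]; exact Set.inter_subset_right
      have hminB := (hall B.1 B.2).1
      exact hminB.2 A.1 A.2.1 ⟨hAB, fun hs => hne (Subtype.ext (hAB.antisymm hs))⟩
    have hreach := hconn.preconnected ⟨I, hIv⟩ ⟨J, hJv⟩
    obtain ⟨w⟩ := hreach
    cases w with
    | nil => exact hIJ rfl
    | cons h _ => exact noadj _ _ h
end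

section
/- Let S be a semigroup. If the intersection ideal graph Γ(S) is connected, then its diameter is at most 2; that is, any two distinct nontrivial left ideals of S are joined in Γ(S) by a path of length at most 2. -/
/-- If `Γ(S)` is connected then its diameter is at most `2`: any two vertices are
joined by a path of length at most `2`. -/
theorem idealGraph_ediam_le_two (S : Type*) [Semigroup S]
    (h : (idealGraph S).Connected) :
    (idealGraph S).ediam ≤ 2 := by
  rw [SimpleGraph.ediam_le_iff]
  intro I J
  by_cases hIJ : I = J
  · subst hIJ; simp [SimpleGraph.edist_self]
  by_cases hint : (I.1 ∩ J.1).Nonempty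
  · -- adjacent
    have hadj : (idealGraph S).Adj I J := ⟨hIJ, hint⟩
    calc (idealGraph S).edist I J ≤ (hadj.toWalk).length := SimpleGraph.edist_le _
      _ ≤ 2 := by norm_num
  · by_cases huniv : I.1 ∪ J.1 = Set.univ
    · -- union is everything
      by_cases hK : ∃ K : {I : Set S // IsNontrivialLeftIdeal S I},
          (K.1 ∩ I.1).Nonempty ∧ (K.1 ∩ J.1).Nonempty
      · obtain ⟨K, hKI, hKJ⟩ := hK
        have hKneI : K ≠ I := by
          rintro rfl; exact hint hKJ
        have hKneJ : K ≠ J := by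
          rintro rfl; exact hint (by rwa [Set.inter_comm] at hKI)
        have h1 : (idealGraph S).Adj I K := ⟨hKneI.symm, by rwa [Set.inter_comm] at hKI⟩
        have h2 : (idealGraph S).Adj K J := ⟨hKneJ, hKJ⟩
        calc (idealGraph S).edist I J ≤ (h1.toWalk.append h2.toWalk).length :=
              SimpleGraph.edist_le _
          _ ≤ 2 := by simp
      · -- contradiction with connectivity
        exfalso
        push_neg at hK
        obtain ⟨p⟩ := h I J
        have key : ∀ (u w : {I : Set S // IsNontrivialLeftIdeal S I})
            (q : (idealGraph S).Walk u w), (w.1 ∩ J.1).Nonempty →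
            ¬ (u.1 ∩ J.1).Nonempty → False := by
          intro u w q
          induction q with
          | nil => exact fun hw hu => hu hw
          | @cons u v w huv q ih =>
            intro hw hu
            have huI : u.1 ⊆ I.1 := by
              intro x hx
              have hx2 : x ∈ I.1 ∪ J.1 := huniv ▸ Set.mem_univ x
              rcases hx2 with h' | h'
              · exact h'
              · exact absurd ⟨x, hx, h'⟩ hu
            obtain ⟨x, hxu, hxv⟩ := huv.2
            exact ih hw (by rw [Set.not_nonempty_iff_eq_empty]; exact hK v ⟨x, hxv, huI hxu⟩)
        exact key I J p (by simpa using J.2.1.1) hint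
    · -- union is a nontrivial left ideal, common neighbor
      have hIdeal : IsNontrivialLeftIdeal S (I.1 ∪ J.1) := by
        refine ⟨⟨I.2.1.1.mono Set.subset_union_left, ?_⟩, huniv⟩
        rintro s x (hx | hx)
        · exact Or.inl (I.2.1.2 s x hx)
        · exact Or.inr (J.2.1.2 s x hx)
      set K : {I : Set S // IsNontrivialLeftIdeal S I} := ⟨I.1 ∪ J.1, hIdeal⟩ with hKdef
      have hKneI : K ≠ I := by
        intro heq
        obtain ⟨y, hy⟩ := J.2.1.1
        have : y ∈ I.1 := by
          have : y ∈ K.1 := Or.inr hy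
          rwa [heq] at this
        exact hint ⟨y, this, hy⟩
      have hKneJ : K ≠ J := by
        intro heq
        obtain ⟨y, hy⟩ := I.2.1.1
        have : y ∈ J.1 := by
          have : y ∈ K.1 := Or.inl hy
          rwa [heq] at this
        exact hint ⟨y, hy, this⟩
      have h1 : (idealGraph S).Adj I K := by
        refine ⟨hKneI.symm, ?_⟩
        obtain ⟨y, hy⟩ := I.2.1.1
        exact ⟨y, hy, Or.inl hy⟩
      have h2 : (idealGraph S).Adj K J := by
        refine ⟨hKneJ, ?_⟩
        obtain ⟨y, hy⟩ := J.2.1.1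
        exact ⟨y, Or.inr hy, hy⟩
      calc (idealGraph S).edist I J ≤ (h1.toWalk.append h2.toWalk).length :=
            SimpleGraph.edist_le _
        _ ≤ 2 := by simp
end

section
/- Let S be a semigroup having at least one minimal left ideal. Then the intersection ideal graph Γ(S) is a complete graph if and only if S has a unique minimal left ideal. -/
/-- Let `S` have a minimal left ideal. Then `Γ(S)` is complete iff `S` has a unique
minimal left ideal. -/
theorem idealGraph_complete_iff_unique_minimal (S : Type*) [Semigroup S]
    (h : ∃ I : Set S, IsMinimalLeftIdeal S I) :
    (∀ u v : {I : Set S // IsNontrivialLeftIdeal S I}, u ≠ v → (idealGraph S).Adj u v) ↔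
      (∃! I : Set S, IsMinimalLeftIdeal S I) := by
  obtain ⟨M, hM⟩ := h
  constructor
  · intro hcomp
    refine ⟨M, hM, ?_⟩
    intro N hN
    by_contra hne
    have hadj := hcomp ⟨N, hN.1⟩ ⟨M, hM.1⟩ (by simpa using hne)
    obtain ⟨-, hx⟩ := hadj
    have hid : IsLeftIdeal S (N ∩ M) :=
      ⟨hx, fun s x hx => ⟨hN.1.1.2 s x hx.1, hM.1.1.2 s x hx.2⟩⟩
    have h1 : N ∩ M = M := by
      by_contra hc
      exact hM.2 _ hid (Set.ssubset_iff_subset_ne.mpr ⟨Set.inter_subset_right, hc⟩)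
    have h2 : N ∩ M = N := by
      by_contra hc
      exact hN.2 _ hid (Set.ssubset_iff_subset_ne.mpr ⟨Set.inter_subset_left, hc⟩)
    exact hne (h2.symm.trans h1)
  · rintro ⟨M', hM', huniq⟩ u v huv
    -- key: M' is contained in every nontrivial left ideal
    have key : ∀ I : Set S, IsNontrivialLeftIdeal S I → M' ⊆ I := by
      intro I hI
      obtain ⟨x, hxI⟩ := hI.1.1
      set Mx : Set S := (fun m => m * x) '' M' with hMx
      have hMxI : Mx ⊆ I := by
        rintro y ⟨m, hm, rfl⟩
        exact hI.1.2 m x hxI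
      have hMxnt : IsNontrivialLeftIdeal S Mx := by
        refine ⟨⟨hM'.1.1.1.image _, ?_⟩, ?_⟩
        · rintro s y ⟨m, hm, rfl⟩
          exact ⟨s * m, hM'.1.1.2 s m hm, by dsimp only; rw [mul_assoc]⟩
        · intro hu
          exact hI.2 (Set.eq_univ_of_univ_subset (hu ▸ hMxI))
      have hMxmin : IsMinimalLeftIdeal S Mx := by
        refine ⟨hMxnt, ?_⟩
        intro J hJ hJss
        set K : Set S := {m | m ∈ M' ∧ m * x ∈ J} with hK
        have hKid : IsLeftIdeal S K := by
          refine ⟨?_, ?_⟩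
          · obtain ⟨j, hj⟩ := hJ.1
            obtain ⟨m, hm, hmx⟩ := hJss.1 hj
            exact ⟨m, hm, by rw [show m * x = j from hmx]; exact hj⟩
          · rintro s m ⟨hm1, hm2⟩
            exact ⟨hM'.1.1.2 s m hm1, by rw [mul_assoc]; exact hJ.2 s _ hm2⟩
        have hKM : K = M' := by
          by_contra hc
          exact hM'.2 _ hKid
            (Set.ssubset_iff_subset_ne.mpr ⟨fun m hm => hm.1, hc⟩)
        have : Mx ⊆ J := by
          rintro y ⟨m, hm, rfl⟩
          exact (hKM ▸ hm : m ∈ K).2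
        exact hJss.2 this
      have := huniq Mx hMxmin
      exact this ▸ hMxI
    obtain ⟨m, hm⟩ := hM'.1.1.1
    exact ⟨huv, m, key u.1 u.2 hm, key v.1 v.2 hm⟩
end

section
/- Let S be a semigroup with only finitely many nontrivial left ideals. Then the intersection ideal graph Γ(S) is a regular graph if and only if Γ(S) is either a null graph or a complete graph. -/
/-- For a semigroup with finitely many nontrivial left ideals, `Γ(S)` is regular iff
it is null or complete. -/
theorem idealGraph_regular_iff_null_or_complete (S : Type*) [Semigroup S]
    (hfin : {I : Set S | IsNontrivialLeftIdeal S I}.Finite) :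
    (∃ d : ℕ, ∀ v : {I : Set S // IsNontrivialLeftIdeal S I},
        ((idealGraph S).neighborSet v).ncard = d) ↔
      ((∀ u v : {I : Set S // IsNontrivialLeftIdeal S I}, ¬ (idealGraph S).Adj u v) ∨
        (∀ u v : {I : Set S // IsNontrivialLeftIdeal S I}, u ≠ v → (idealGraph S).Adj u v)) := by
  haveI : Finite {I : Set S // IsNontrivialLeftIdeal S I} := hfin.to_subtype
  constructor
  · rintro ⟨d, hd⟩
    by_contra hcon
    push_neg at hcon
    obtain ⟨hnn, hnc⟩ := hcon
    obtain ⟨I0, J0, hE⟩ := hnn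
    obtain ⟨A, B, hABne, hnAdj⟩ := hnc
    have hdisj : A.1 ∩ B.1 = ∅ := by
      by_contra h
      exact hnAdj ⟨hABne, Set.nonempty_iff_ne_empty.2 h⟩
    -- key lemma: no two disjoint vertices with union ≠ univ
    have keyL : ∀ X Y : {I : Set S // IsNontrivialLeftIdeal S I},
        X.1 ∩ Y.1 = ∅ → X.1 ∪ Y.1 ≠ Set.univ → False := by
      intro X Y hdj hU
      obtain ⟨x0, hx0⟩ := X.2.1.1
      obtain ⟨y0, hy0⟩ := Y.2.1.1
      have hCnt : IsNontrivialLeftIdeal S (X.1 ∪ Y.1) := by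
        refine ⟨⟨⟨x0, Or.inl hx0⟩, ?_⟩, hU⟩
        rintro s z (hz | hz)
        · exact Or.inl (X.2.1.2 s z hz)
        · exact Or.inr (Y.2.1.2 s z hz)
      set C : {I : Set S // IsNontrivialLeftIdeal S I} := ⟨X.1 ∪ Y.1, hCnt⟩ with hCdef
      have hCX : C ≠ X := by
        intro h
        have h' : X.1 ∪ Y.1 = X.1 := congrArg Subtype.val h
        have : y0 ∈ X.1 ∩ Y.1 := ⟨h' ▸ Or.inr hy0, hy0⟩
        rw [hdj] at this; exact this
      have hXY : X ≠ Y := by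
        intro h
        have : x0 ∈ X.1 ∩ Y.1 := ⟨hx0, h ▸ hx0⟩
        rw [hdj] at this; exact this
      have hCinNX : C ∈ (idealGraph S).neighborSet X :=
        ⟨fun h => hCX h.symm, ⟨x0, hx0, Or.inl hx0⟩⟩
      have hXinNC : X ∈ (idealGraph S).neighborSet C :=
        ⟨hCX, ⟨x0, Or.inl hx0, hx0⟩⟩
      have hCY : C ≠ Y := by
        intro h
        have h' : X.1 ∪ Y.1 = Y.1 := congrArg Subtype.val h
        have : x0 ∈ X.1 ∩ Y.1 := ⟨hx0, h' ▸ Or.inl hx0⟩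
        rw [hdj] at this; exact this
      have hYinNC : Y ∈ (idealGraph S).neighborSet C := ⟨hCY, ⟨y0, Or.inr hy0, hy0⟩⟩
      have hXnotNX : X ∉ (idealGraph S).neighborSet X := fun h => h.1 rfl
      have hYnotNX : Y ∉ (idealGraph S).neighborSet X := by
        intro h
        obtain ⟨z, hz⟩ := h.2
        rw [hdj] at hz; exact hz
      have hsub : insert X (insert Y ((idealGraph S).neighborSet X \ {C}))
          ⊆ (idealGraph S).neighborSet C := by
        rintro K (rfl | rfl | ⟨hK, hKC⟩)
        · exact hXinNC
        · exact hYinNC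
        · obtain ⟨x, hxX, hxK⟩ := (hK : (idealGraph S).Adj X K).2
          exact ⟨fun h => hKC (by rw [h]; rfl), ⟨x, Or.inl hxX, hxK⟩⟩
      have hdpos : 0 < d := by
        rw [← hd X]
        exact (Set.ncard_pos (Set.toFinite _)).2 ⟨C, hCinNX⟩
      have hc1 : (((idealGraph S).neighborSet X) \ {C}).ncard = d - 1 := by
        rw [Set.ncard_diff_singleton_of_mem hCinNX, hd X]
      have hYnot : Y ∉ ((idealGraph S).neighborSet X) \ {C} := fun h => hYnotNX h.1
      have hXnot : X ∉ insert Y (((idealGraph S).neighborSet X) \ {C}) := by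
        rintro (rfl | h)
        · exact hXY rfl
        · exact hXnotNX h.1
      have hcard : (insert X (insert Y (((idealGraph S).neighborSet X) \ {C}))).ncard
          = d + 1 := by
        rw [Set.ncard_insert_of_notMem hXnot, Set.ncard_insert_of_notMem hYnot, hc1]
        omega
      have := Set.ncard_le_ncard hsub (Set.toFinite _)
      rw [hcard, hd C] at this
      omega
    by_cases hU : A.1 ∪ B.1 = Set.univ
    · have hdpos : 0 < d := by
        rw [← hd I0]
        exact (Set.ncard_pos (Set.toFinite _)).2 ⟨J0, hE⟩
      have hNA : ((idealGraph S).neighborSet A).Nonempty := by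
        rw [← Set.ncard_pos (Set.toFinite _), hd A]; exact hdpos
      obtain ⟨K, hK⟩ := hNA
      have claim : ∀ X Y K' : {I : Set S // IsNontrivialLeftIdeal S I},
          X.1 ∩ Y.1 = ∅ → X.1 ∪ Y.1 = Set.univ →
          (idealGraph S).Adj X K' → X.1 ⊆ K'.1 := by
        intro X Y K' hdj hU' hA
        by_contra hns
        have hne : (X.1 ∩ K'.1).Nonempty := hA.2
        have hnt : IsNontrivialLeftIdeal S (X.1 ∩ K'.1) := by
          refine ⟨⟨hne, ?_⟩, ?_⟩
          · rintro s z ⟨hz1, hz2⟩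
            exact ⟨X.2.1.2 s z hz1, K'.2.1.2 s z hz2⟩
          · intro h
            exact X.2.2 (Set.eq_univ_of_univ_subset (h ▸ Set.inter_subset_left))
        refine keyL ⟨X.1 ∩ K'.1, hnt⟩ Y ?_ ?_
        · apply Set.eq_empty_of_subset_empty
          rw [← hdj]
          exact Set.inter_subset_inter_left _ Set.inter_subset_left
        · intro hUu
          apply hns
          intro x hx
          have hxu : x ∈ (X.1 ∩ K'.1) ∪ Y.1 := hUu ▸ Set.mem_univ x
          rcases hxu with h | h
          · exact h.2
          · exfalso
            have : x ∈ X.1 ∩ Y.1 := ⟨hx, h⟩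
            rw [hdj] at this; exact this
      have hAK : A.1 ⊆ K.1 := claim A B K hdisj hU hK
      have hEx : ∃ y ∈ K.1, y ∉ A.1 := by
        by_contra h
        push_neg at h
        exact (hK : (idealGraph S).Adj A K).1
          (Subtype.ext (Set.Subset.antisymm hAK h))
      obtain ⟨y, hyK, hyA⟩ := hEx
      have hyB : y ∈ B.1 := by
        have : y ∈ A.1 ∪ B.1 := hU ▸ Set.mem_univ y
        rcases this with h | h
        · exact absurd h hyA
        · exact h
      have hBKne : B ≠ K := by
        intro h
        obtain ⟨a, ha⟩ := A.2.1.1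
        have : a ∈ A.1 ∩ B.1 := ⟨ha, by rw [h]; exact hAK ha⟩
        rw [hdisj] at this; exact this
      have hAdjBK : (idealGraph S).Adj B K := ⟨hBKne, ⟨y, hyB, hyK⟩⟩
      have hBK : B.1 ⊆ K.1 := by
        refine claim B A K ?_ ?_ hAdjBK
        · rw [Set.inter_comm]; exact hdisj
        · rw [Set.union_comm]; exact hU
      have : Set.univ ⊆ K.1 := by
        rw [← hU]
        exact Set.union_subset hAK hBK
      exact K.2.2 (Set.eq_univ_of_univ_subset this)
    · exact keyL A B hdisj hU
  · rintro (h | h)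
    · refine ⟨0, fun v => ?_⟩
      have : (idealGraph S).neighborSet v = ∅ := by
        ext u
        simp only [SimpleGraph.mem_neighborSet, Set.mem_empty_iff_false, iff_false]
        exact h v u
      rw [this, Set.ncard_empty]
    · refine ⟨Nat.card {I : Set S // IsNontrivialLeftIdeal S I} - 1, fun v => ?_⟩
      have hns : (idealGraph S).neighborSet v = Set.univ \ {v} := by
        ext u
        simp only [SimpleGraph.mem_neighborSet, Set.mem_diff, Set.mem_univ, true_and,
          Set.mem_singleton_iff]
        constructor
        · intro ha h'
          exact ha.1 h'.symm
        · intro hne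
          exact ((h u v hne)).symm
      rw [hns, Set.ncard_diff_singleton_of_mem (Set.mem_univ v), Set.ncard_univ]
end

section
/- Let S be a semigroup such that the intersection ideal graph Γ(S) contains a cycle. Then the girth of Γ(S) equals 3, i.e., Γ(S) contains a triangle. -/
open SimpleGraph

/-- From a triangle we get `egirth = 3`. -/
lemma egirth_eq_three_of_triangle {V : Type*} {G : SimpleGraph V} {a b c : V}
    (hab : G.Adj a b) (hbc : G.Adj b c) (hca : G.Adj c a) : G.egirth = 3 := by
  refine le_antisymm ?_ G.three_le_egirth
  have hpath : (Walk.cons hbc (Walk.cons hca Walk.nil)).IsPath := by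
    simp [Walk.isPath_def, hbc.ne, hca.ne, hab.ne']
  have hcyc : (Walk.cons hab (Walk.cons hbc (Walk.cons hca Walk.nil))).IsCycle := by
    rw [Walk.cons_isCycle_iff]
    refine ⟨hpath, ?_⟩
    simp only [Walk.edges_cons, Walk.edges_nil, List.mem_cons, List.not_mem_nil, or_false]
    rintro (h | h) <;> rw [Sym2.eq_iff] at h
    · rcases h with ⟨h1, h2⟩ | ⟨h1, h2⟩
      · exact hab.ne h1
      · exact hca.ne h1.symm
    · rcases h with ⟨h1, h2⟩ | ⟨h1, h2⟩
      · exact hab.ne h2.symm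
      · exact hbc.ne h2
  calc G.egirth ≤ ((Walk.cons hab (Walk.cons hbc (Walk.cons hca Walk.nil))).length : ℕ∞) :=
        iInf_le_of_le a <| iInf_le_of_le _ <| iInf_le_of_le hcyc le_rfl
    _ = 3 := by simp

/-- The intersection of two adjacent nontrivial left ideals is a nontrivial left ideal. -/
lemma inter_nontrivial {S : Type*} [Semigroup S] {I J : Set S}
    (hI : IsNontrivialLeftIdeal S I) (_ : IsNontrivialLeftIdeal S J)
    (hne : (I ∩ J).Nonempty) : IsNontrivialLeftIdeal S (I ∩ J) := by
  refine ⟨⟨hne, fun s x hx => ⟨hI.1.2 s x hx.1, ‹IsNontrivialLeftIdeal S J›.1.2 s x hx.2⟩⟩, ?_⟩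
  intro hu
  apply hI.2
  apply Set.eq_univ_of_univ_subset
  rw [← hu]
  exact Set.inter_subset_left

/-- From a path `v0-v1-v2-v3` with `v0 ≠ v2` and `v1 ≠ v3` we get a triangle. -/
lemma triangle_of_path {S : Type*} [Semigroup S]
    {v0 v1 v2 v3 : {I : Set S // IsNontrivialLeftIdeal S I}}
    (h01 : (idealGraph S).Adj v0 v1) (h12 : (idealGraph S).Adj v1 v2)
    (h23 : (idealGraph S).Adj v2 v3) (h02 : v0 ≠ v2) (h13 : v1 ≠ v3) :
    ∃ a b c, (idealGraph S).Adj a b ∧ (idealGraph S).Adj b c ∧ (idealGraph S).Adj c a := by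
  by_cases h02n : (v0.1 ∩ v2.1).Nonempty
  · exact ⟨v0, v1, v2, h01, h12, ⟨h02.symm, by rwa [Set.inter_comm]⟩⟩
  by_cases h13n : (v1.1 ∩ v3.1).Nonempty
  · exact ⟨v1, v2, v3, h12, h23, ⟨h13.symm, by rwa [Set.inter_comm]⟩⟩
  rw [Set.not_nonempty_iff_eq_empty] at h02n h13n
  -- the intersection K = v1 ∩ v2
  have hKne : (v1.1 ∩ v2.1).Nonempty := h12.2
  have hK : IsNontrivialLeftIdeal S (v1.1 ∩ v2.1) := inter_nontrivial v1.2 v2.2 hKne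
  set K : {I : Set S // IsNontrivialLeftIdeal S I} := ⟨v1.1 ∩ v2.1, hK⟩ with hKdef
  by_cases hK1 : K.1 = v1.1
  · -- v1 ⊆ v2, so v0 ∩ v1 ⊆ v0 ∩ v2 = ∅, contradicting adjacency of v0, v1
    exfalso
    have hsub : v1.1 ⊆ v2.1 := by rw [← Set.inter_eq_left]; exact hK1
    obtain ⟨x, hx0, hx1⟩ := h01.2
    exact Set.eq_empty_iff_forall_notMem.mp h02n x ⟨hx0, hsub hx1⟩
  by_cases hK2 : K.1 = v2.1
  · -- v2 ⊆ v1, so v2 ∩ v3 ⊆ v1 ∩ v3 = ∅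
    exfalso
    have hsub : v2.1 ⊆ v1.1 := by rw [← Set.inter_eq_right]; exact hK2
    obtain ⟨x, hx2, hx3⟩ := h23.2
    exact Set.eq_empty_iff_forall_notMem.mp h13n x ⟨hsub hx2, hx3⟩
  · refine ⟨v1, v2, K, h12, ?_, ?_⟩
    · exact ⟨fun he => hK2 (by rw [he]), ⟨hKne.choose, hKne.choose_spec.2, hKne.choose_spec⟩⟩
    · exact ⟨fun he => hK1 (by rw [← he]), ⟨hKne.choose, hKne.choose_spec, hKne.choose_spec.1⟩⟩

/-- If `Γ(S)` contains a cycle then its girth equals `3`. -/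
theorem idealGraph_girth_eq_three (S : Type*) [Semigroup S]
    (h : ∃ (v : {I : Set S // IsNontrivialLeftIdeal S I}) (c : (idealGraph S).Walk v v),
      c.IsCycle) :
    (idealGraph S).egirth = 3 := by
  obtain ⟨v, c, hc⟩ := h
  match c, hc with
  | .nil, hc => exact absurd rfl hc.ne_nil
  | .cons h01 .nil, hc => exact absurd h01 ((idealGraph S).loopless.irrefl v)
  | .cons h01 (.cons h12 .nil), hc =>
    exact absurd hc.three_le_length (by simp)
  | .cons (v := v1) h01 (.cons (v := v2) h12 (.cons (v := v3) h23 r)), hc =>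
    have hnd := hc.2
    simp only [Walk.support_cons, List.tail_cons, List.nodup_cons] at hnd
    have hv13 : v1 ≠ v3 := fun he =>
      hnd.1 (by rw [he]; exact List.mem_cons_of_mem _ r.start_mem_support)
    have hv02 : v ≠ v2 := fun he =>
      hnd.2.1 (by rw [← he]; exact r.end_mem_support)
    obtain ⟨a, b, c', hab, hbc, hca⟩ := triangle_of_path h01 h12 h23 hv02 hv13
    exact egirth_eq_three_of_triangle hab hbc hca
end

section
/- Let S be a semigroup having at least one minimal left ideal and such that the intersection ideal graph Γ(S) has more than one vertex. Then the following are equivalent: (a) Γ(S) is a star graph; (b) Γ(S) is a tree; (c) Γ(S) is connected and bipartite; (d) either S has exactly three nontrivial left ideals, namely I₁, I₂ and I₁ ∪ I₂ where I₁ and I₂ are minimal left ideals and I₁ ∪ I₂ ≠ S, or S has exactly two nontrivial left ideals I₁ and I₂ with I₁ ⊊ I₂. -/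
section Aux
variable {S : Type*} [Semigroup S]

lemma union_isLeftIdeal {I J : Set S} (hI : IsLeftIdeal S I) (hJ : IsLeftIdeal S J) :
    IsLeftIdeal S (I ∪ J) :=
  ⟨hI.1.mono Set.subset_union_left, by
    rintro s x (hx | hx)
    · exact Or.inl (hI.2 s x hx)
    · exact Or.inr (hJ.2 s x hx)⟩

lemma minimal_subset {M I : Set S} (hM : IsMinimalLeftIdeal S M) (hI : IsLeftIdeal S I)
    (h : (M ∩ I).Nonempty) : M ⊆ I := by
  have hMI : IsLeftIdeal S (M ∩ I) := ⟨h, fun s x hx => ⟨hM.1.1.2 s x hx.1, hI.2 s x hx.2⟩⟩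
  have hns := hM.2 _ hMI
  have hsub : M ∩ I ⊆ M := Set.inter_subset_left
  have heq : M ∩ I = M := by
    by_contra hne
    exact hns ⟨hsub, fun h' => hne (Set.Subset.antisymm hsub h')⟩
  intro x hx
  rw [← heq] at hx
  exact hx.2

lemma minimal_eq_of_inter {M N : Set S} (hM : IsMinimalLeftIdeal S M)
    (hN : IsMinimalLeftIdeal S N) (h : (M ∩ N).Nonempty) : M = N :=
  Set.Subset.antisymm (minimal_subset hM hN.1.1 h)
    (minimal_subset hN hM.1.1 (by rwa [Set.inter_comm]))

lemma exists_minimal_subset {M I : Set S} (hM : IsMinimalLeftIdeal S M)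
    (hI : IsNontrivialLeftIdeal S I) : ∃ N : Set S, IsMinimalLeftIdeal S N ∧ N ⊆ I := by
  obtain ⟨x, hx⟩ := hI.1.1
  have hsub : (fun m => m * x) '' M ⊆ I := by
    rintro y ⟨m, hm, rfl⟩
    exact hI.1.2 m x hx
  have hideal : IsLeftIdeal S ((fun m => m * x) '' M) := by
    refine ⟨hM.1.1.1.image _, ?_⟩
    rintro s y ⟨m, hm, rfl⟩
    exact ⟨s * m, hM.1.1.2 s m hm, mul_assoc s m x⟩
  refine ⟨(fun m => m * x) '' M, ⟨⟨hideal, ?_⟩, ?_⟩, hsub⟩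
  · intro h
    exact hI.2 (Set.eq_univ_of_univ_subset (h ▸ hsub))
  · intro J hJ hJss
    obtain ⟨y, hy⟩ := hJ.1
    obtain ⟨m₀, hm₀, hym⟩ := hJss.1 hy
    have hAideal : IsLeftIdeal S {m ∈ M | m * x ∈ J} := by
      refine ⟨⟨m₀, hm₀, (show m₀ * x = y from hym) ▸ hy⟩, ?_⟩
      rintro s m ⟨hmM, hmJ⟩
      exact ⟨hM.1.1.2 s m hmM, by rw [mul_assoc]; exact hJ.2 s _ hmJ⟩
    have hAsub : {m ∈ M | m * x ∈ J} ⊆ M := Set.sep_subset _ _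
    have hAeq : {m ∈ M | m * x ∈ J} = M := by
      by_contra hne
      exact hM.2 _ hAideal ⟨hAsub, fun h' => hne (Set.Subset.antisymm hAsub h')⟩
    have : (fun m => m * x) '' M ⊆ J := by
      rintro y ⟨m, hm, rfl⟩
      have hmem : m ∈ {m ∈ M | m * x ∈ J} := by rw [hAeq]; exact hm
      exact hmem.2
    exact hJss.2 this

end Aux

lemma star_isAcyclic {V : Type*} (G : SimpleGraph V) (c : V)
    (h : ∀ u v : V, G.Adj u v → u = c ∨ v = c) : G.IsAcyclic := by
  classical
  intro v p hp
  have hc : c ∈ p.support := by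
    cases p with
    | nil => exact absurd hp SimpleGraph.Walk.IsCycle.not_of_nil
    | cons h' q =>
      rcases h _ _ h' with rfl | rfl
      · exact SimpleGraph.Walk.start_mem_support _
      · rw [SimpleGraph.Walk.support_cons]
        exact List.mem_cons_of_mem _ (SimpleGraph.Walk.start_mem_support q)
  obtain ⟨q, hq⟩ : ∃ q : G.Walk c c, q.IsCycle := ⟨p.rotate c hc, hp.rotate hc⟩
  cases q with
  | nil => exact SimpleGraph.Walk.IsCycle.not_of_nil hq
  | cons h₁ s =>
    cases s with
    | nil => exact G.loopless.irrefl c h₁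
    | cons h₂ r =>
      cases r with
      | nil =>
        have := hq.three_le_length
        simp [SimpleGraph.Walk.length_cons] at this
      | cons h₃ r' =>
        rename_i a b b'
        have hbc : b ≠ c := by
          intro hbceq
          have hnd := hq.support_nodup
          simp only [SimpleGraph.Walk.support_cons, List.tail_cons, List.nodup_cons] at hnd
          exact hnd.2.1 (hbceq ▸ SimpleGraph.Walk.end_mem_support r')
        rcases h _ _ h₂ with rfl | rfl
        · exact h₁.ne' rfl
        · exact hbc rfl

section Main
variable {S : Type*} [Semigroup S]

lemma tf_classification
    (hmin : ∃ I : Set S, IsMinimalLeftIdeal S I)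
    (hvert : Nontrivial {I : Set S // IsNontrivialLeftIdeal S I})
    (hconn : (idealGraph S).Connected)
    (htf : ∀ a b c : {I : Set S // IsNontrivialLeftIdeal S I},
      (idealGraph S).Adj a b → (idealGraph S).Adj a c → (idealGraph S).Adj b c → False) :
    ((∃ I₁ I₂ : Set S, IsMinimalLeftIdeal S I₁ ∧ IsMinimalLeftIdeal S I₂ ∧ I₁ ≠ I₂ ∧
        I₁ ∪ I₂ ≠ Set.univ ∧
        {I : Set S | IsNontrivialLeftIdeal S I} = {I₁, I₂, I₁ ∪ I₂}) ∨
      (∃ I₁ I₂ : Set S, I₁ ⊂ I₂ ∧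
        {I : Set S | IsNontrivialLeftIdeal S I} = {I₁, I₂})) := by
  obtain ⟨M, hM⟩ := hmin
  by_cases hone : ∀ N : Set S, IsMinimalLeftIdeal S N → N = M
  · -- unique minimal ideal: right branch
    have hcont : ∀ w : {I : Set S // IsNontrivialLeftIdeal S I}, M ⊆ w.1 := by
      intro w
      obtain ⟨N, hN, hNsub⟩ := exists_minimal_subset hM w.2
      exact (hone N hN) ▸ hNsub
    obtain ⟨m, hm⟩ := hM.1.1.1
    have hadj : ∀ a b : {I : Set S // IsNontrivialLeftIdeal S I}, a ≠ b →
        (idealGraph S).Adj a b :=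
      fun a b hne => ⟨hne, ⟨m, hcont a hm, hcont b hm⟩⟩
    have key2 : ∀ w z t : {I : Set S // IsNontrivialLeftIdeal S I}, w ≠ z → t = w ∨ t = z := by
      intro w z t hwz
      by_contra hcon
      push_neg at hcon
      exact htf w z t (hadj w z hwz) (hadj w t (Ne.symm hcon.1)) (hadj z t (Ne.symm hcon.2))
    obtain ⟨u, v, huv⟩ := hvert
    obtain ⟨b, hab⟩ : ∃ b, (⟨M, hM.1⟩ : {I : Set S // IsNontrivialLeftIdeal S I}) ≠ b := by
      rcases eq_or_ne (⟨M, hM.1⟩ : {I : Set S // IsNontrivialLeftIdeal S I}) u with h | h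
      · exact ⟨v, h ▸ huv⟩
      · exact ⟨u, h⟩
    refine Or.inr ⟨M, b.1, ?_, ?_⟩
    · exact HasSubset.Subset.ssubset_of_ne (hcont b) (fun h => hab (Subtype.ext h))
    · ext x
      simp only [Set.mem_setOf_eq, Set.mem_insert_iff, Set.mem_singleton_iff]
      constructor
      · intro hx
        rcases key2 ⟨M, hM.1⟩ b ⟨x, hx⟩ hab with h | h
        · exact Or.inl (congrArg Subtype.val h)
        · exact Or.inr (congrArg Subtype.val h)
      · rintro (rfl | rfl)
        · exact hM.1
        · exact b.2
  · push_neg at hone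
    obtain ⟨M₂, hM₂, hne2⟩ := hone
    have hdisj : ¬(M ∩ M₂).Nonempty := fun h => hne2 ((minimal_eq_of_inter hM hM₂ h).symm)
    obtain ⟨m₁, hm₁⟩ := hM.1.1.1
    obtain ⟨m₂, hm₂⟩ := hM₂.1.1.1
    have step : ∀ A B : Set S, IsMinimalLeftIdeal S A → IsMinimalLeftIdeal S B →
        A ∪ B = Set.univ → ∀ w : {I : Set S // IsNontrivialLeftIdeal S I},
        A ⊆ w.1 → w.1 = A := by
      intro A B hA hB hUn w hAw
      by_contra hne
      obtain ⟨z, hzw, hzA⟩ := Set.exists_of_ssubset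
        (HasSubset.Subset.ssubset_of_ne hAw (fun h => hne h.symm))
      have hzB : z ∈ B := by
        have hz : z ∈ A ∪ B := by rw [hUn]; trivial
        rcases hz with h' | h'
        · exact absurd h' hzA
        · exact h'
      have hBw : B ⊆ w.1 := minimal_subset hB w.2.1 ⟨z, hzB, hzw⟩
      exact w.2.2 (Set.eq_univ_of_univ_subset (by rw [← hUn]; exact Set.union_subset hAw hBw))
    have hU : M ∪ M₂ ≠ Set.univ := by
      intro hUn
      have hall : ∀ w : {I : Set S // IsNontrivialLeftIdeal S I}, w.1 = M ∨ w.1 = M₂ := by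
        intro w
        obtain ⟨N, hN, hNsub⟩ := exists_minimal_subset hM w.2
        obtain ⟨y, hy⟩ := hN.1.1.1
        have hy2 : y ∈ M ∪ M₂ := by rw [hUn]; trivial
        rcases hy2 with hyM | hyM₂
        · have hNM : N = M := minimal_eq_of_inter hN hM ⟨y, hy, hyM⟩
          exact Or.inl (step M M₂ hM hM₂ hUn w (hNM ▸ hNsub))
        · have hNM₂ : N = M₂ := minimal_eq_of_inter hN hM₂ ⟨y, hy, hyM₂⟩
          exact Or.inr (step M₂ M hM₂ hM (by rw [Set.union_comm]; exact hUn) w (hNM₂ ▸ hNsub))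
      have hnoadj : ∀ u w : {I : Set S // IsNontrivialLeftIdeal S I},
          ¬(idealGraph S).Adj u w := by
        intro u w hadj
        obtain ⟨hne', x, hxu, hxw⟩ := hadj
        rcases hall u with h1 | h1 <;> rcases hall w with h2 | h2
        · exact hne' (Subtype.ext (h1.trans h2.symm))
        · exact hdisj ⟨x, h1 ▸ hxu, h2 ▸ hxw⟩
        · exact hdisj ⟨x, h2 ▸ hxw, h1 ▸ hxu⟩
        · exact hne' (Subtype.ext (h1.trans h2.symm))
      obtain ⟨u, v, huv⟩ := hvert
      refine (hconn.preconnected u v).elim (fun p => ?_)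
      cases p with
      | nil => exact huv rfl
      | cons h' q => exact hnoadj _ _ h'
    have hUnt : IsNontrivialLeftIdeal S (M ∪ M₂) := ⟨union_isLeftIdeal hM.1.1 hM₂.1.1, hU⟩
    have hMne : M ≠ M ∪ M₂ := by
      intro h
      exact hdisj ⟨m₂, by rw [h]; exact Or.inr hm₂, hm₂⟩
    have hM₂ne : M₂ ≠ M ∪ M₂ := by
      intro h
      exact hdisj ⟨m₁, hm₁, by rw [h]; exact Or.inl hm₁⟩
    have step2 : ∀ w : {I : Set S // IsNontrivialLeftIdeal S I},
        M ⊆ w.1 → w.1 = M ∨ w.1 = M ∪ M₂ := by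
      intro w hsub
      by_contra hcon
      push_neg at hcon
      exact htf w ⟨M, hM.1⟩ ⟨M ∪ M₂, hUnt⟩
        ⟨fun h => hcon.1 (congrArg Subtype.val h), ⟨m₁, hsub hm₁, hm₁⟩⟩
        ⟨fun h => hcon.2 (congrArg Subtype.val h), ⟨m₁, hsub hm₁, Or.inl hm₁⟩⟩
        ⟨fun h => hMne (congrArg Subtype.val h), ⟨m₁, hm₁, Or.inl hm₁⟩⟩
    have step2' : ∀ w : {I : Set S // IsNontrivialLeftIdeal S I},
        M₂ ⊆ w.1 → w.1 = M₂ ∨ w.1 = M ∪ M₂ := by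
      intro w hsub
      by_contra hcon
      push_neg at hcon
      exact htf w ⟨M₂, hM₂.1⟩ ⟨M ∪ M₂, hUnt⟩
        ⟨fun h => hcon.1 (congrArg Subtype.val h), ⟨m₂, hsub hm₂, hm₂⟩⟩
        ⟨fun h => hcon.2 (congrArg Subtype.val h), ⟨m₂, hsub hm₂, Or.inr hm₂⟩⟩
        ⟨fun h => hM₂ne (congrArg Subtype.val h), ⟨m₂, hm₂, Or.inr hm₂⟩⟩
    have hall : ∀ w : {I : Set S // IsNontrivialLeftIdeal S I},
        w.1 = M ∨ w.1 = M₂ ∨ w.1 = M ∪ M₂ := by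
      intro w
      obtain ⟨N, hN, hNsub⟩ := exists_minimal_subset hM w.2
      have hN12 : N = M ∨ N = M₂ := by
        by_contra hcon
        push_neg at hcon
        have hd1 : ¬(N ∩ M).Nonempty := fun h => hcon.1 (minimal_eq_of_inter hN hM h)
        have hd2 : ¬(N ∩ M₂).Nonempty := fun h => hcon.2 (minimal_eq_of_inter hN hM₂ h)
        obtain ⟨n, hn⟩ := hN.1.1.1
        have hNU : M ∪ N ≠ Set.univ := by
          intro h
          have hm2' : m₂ ∈ M ∪ N := by rw [h]; trivial
          rcases hm2' with h' | h'
          · exact hdisj ⟨m₂, h', hm₂⟩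
          · exact hd2 ⟨m₂, h', hm₂⟩
        have hMNnt : IsNontrivialLeftIdeal S (M ∪ N) := ⟨union_isLeftIdeal hM.1.1 hN.1.1, hNU⟩
        have hMNe : M ≠ M ∪ N := by
          intro h
          exact hd1 ⟨n, hn, by rw [h]; exact Or.inr hn⟩
        have hUUe : M ∪ M₂ ≠ M ∪ N := by
          intro h
          have hn2 : n ∈ M ∪ M₂ := by rw [h]; exact Or.inr hn
          rcases hn2 with h' | h'
          · exact hd1 ⟨n, hn, h'⟩
          · exact hd2 ⟨n, hn, h'⟩
        exact htf ⟨M, hM.1⟩ ⟨M ∪ M₂, hUnt⟩ ⟨M ∪ N, hMNnt⟩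
          ⟨fun h => hMne (congrArg Subtype.val h), ⟨m₁, hm₁, Or.inl hm₁⟩⟩
          ⟨fun h => hMNe (congrArg Subtype.val h), ⟨m₁, hm₁, Or.inl hm₁⟩⟩
          ⟨fun h => hUUe (congrArg Subtype.val h), ⟨m₁, Or.inl hm₁, Or.inl hm₁⟩⟩
      rcases hN12 with rfl | rfl
      · rcases step2 w hNsub with h | h
        · exact Or.inl h
        · exact Or.inr (Or.inr h)
      · rcases step2' w hNsub with h | h
        · exact Or.inr (Or.inl h)
        · exact Or.inr (Or.inr h)
    refine Or.inl ⟨M, M₂, hM, hM₂, Ne.symm hne2, hU, ?_⟩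
    ext x
    simp only [Set.mem_setOf_eq, Set.mem_insert_iff, Set.mem_singleton_iff]
    constructor
    · intro hx
      exact hall ⟨x, hx⟩
    · rintro (rfl | rfl | rfl)
      · exact hM.1
      · exact hM₂.1
      · exact hUnt

end Main

section Props
variable {S : Type*} [Semigroup S]

lemma D_props
    (hD : (∃ I₁ I₂ : Set S, IsMinimalLeftIdeal S I₁ ∧ IsMinimalLeftIdeal S I₂ ∧ I₁ ≠ I₂ ∧
        I₁ ∪ I₂ ≠ Set.univ ∧
        {I : Set S | IsNontrivialLeftIdeal S I} = {I₁, I₂, I₁ ∪ I₂}) ∨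
      (∃ I₁ I₂ : Set S, I₁ ⊂ I₂ ∧
        {I : Set S | IsNontrivialLeftIdeal S I} = {I₁, I₂})) :
    (idealGraph S).Connected ∧ (idealGraph S).Colorable 2 ∧ (idealGraph S).IsAcyclic ∧
      ∃ c : {I : Set S // IsNontrivialLeftIdeal S I},
        ∀ v, v ≠ c → (idealGraph S).Adj c v := by
  classical
  rcases hD with ⟨M₁, M₂, h1, h2, hne12, hU, hset⟩ | ⟨I₁, I₂, hss, hset⟩
  · have hUnt : IsNontrivialLeftIdeal S (M₁ ∪ M₂) := ⟨union_isLeftIdeal h1.1.1 h2.1.1, hU⟩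
    have hdisj : ¬(M₁ ∩ M₂).Nonempty := fun h => hne12 (minimal_eq_of_inter h1 h2 h)
    obtain ⟨m₁, hm₁⟩ := h1.1.1.1
    obtain ⟨m₂, hm₂⟩ := h2.1.1.1
    set a : {I : Set S // IsNontrivialLeftIdeal S I} := ⟨M₁, h1.1⟩ with ha
    set b : {I : Set S // IsNontrivialLeftIdeal S I} := ⟨M₂, h2.1⟩ with hb
    set c : {I : Set S // IsNontrivialLeftIdeal S I} := ⟨M₁ ∪ M₂, hUnt⟩ with hc
    have hAC : M₁ ≠ M₁ ∪ M₂ := fun h => hdisj ⟨m₂, by rw [h]; exact Or.inr hm₂, hm₂⟩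
    have hBC : M₂ ≠ M₁ ∪ M₂ := fun h => hdisj ⟨m₁, hm₁, by rw [h]; exact Or.inl hm₁⟩
    have hac : a ≠ c := fun h => hAC (congrArg Subtype.val h)
    have hbc : b ≠ c := fun h => hBC (congrArg Subtype.val h)
    have hall : ∀ v : {I : Set S // IsNontrivialLeftIdeal S I}, v = a ∨ v = b ∨ v = c := by
      intro v
      have hv : v.1 ∈ ({M₁, M₂, M₁ ∪ M₂} : Set (Set S)) := by rw [← hset]; exact v.2
      simp only [Set.mem_insert_iff, Set.mem_singleton_iff] at hv
      rcases hv with h | h | h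
      · exact Or.inl (Subtype.ext h)
      · exact Or.inr (Or.inl (Subtype.ext h))
      · exact Or.inr (Or.inr (Subtype.ext h))
    have hadjac : (idealGraph S).Adj a c := ⟨hac, ⟨m₁, hm₁, Or.inl hm₁⟩⟩
    have hadjbc : (idealGraph S).Adj b c := ⟨hbc, ⟨m₂, hm₂, Or.inr hm₂⟩⟩
    haveI : Nonempty {I : Set S // IsNontrivialLeftIdeal S I} := ⟨a⟩
    refine ⟨⟨?_⟩, ?_, ?_, ⟨c, ?_⟩⟩
    · intro u v
      rcases hall u with rfl | rfl | rfl <;> rcases hall v with rfl | rfl | rfl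
      · exact SimpleGraph.Reachable.refl _
      · exact hadjac.reachable.trans hadjbc.symm.reachable
      · exact hadjac.reachable
      · exact hadjbc.reachable.trans hadjac.symm.reachable
      · exact SimpleGraph.Reachable.refl _
      · exact hadjbc.reachable
      · exact hadjac.symm.reachable
      · exact hadjbc.symm.reachable
      · exact SimpleGraph.Reachable.refl _
    · refine ⟨SimpleGraph.Coloring.mk (fun v => if v = c then 0 else 1) ?_⟩
      intro u v hadj
      rcases hall u with rfl | rfl | rfl <;> rcases hall v with rfl | rfl | rfl
      · exact absurd rfl hadj.ne
      · exact absurd hadj.2 hdisj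
      · simp [hac]
      · exact absurd hadj.2 (fun h => hdisj (by rwa [Set.inter_comm] at h))
      · exact absurd rfl hadj.ne
      · simp [hbc]
      · simp [hac]
      · simp [hbc]
      · exact absurd rfl hadj.ne
    · refine star_isAcyclic _ c ?_
      intro u v hadj
      rcases hall u with rfl | rfl | rfl <;> rcases hall v with rfl | rfl | rfl
      · exact absurd rfl hadj.ne
      · exact absurd hadj.2 hdisj
      · exact Or.inr rfl
      · exact absurd hadj.2 (fun h => hdisj (by rwa [Set.inter_comm] at h))
      · exact absurd rfl hadj.ne
      · exact Or.inr rfl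
      · exact Or.inl rfl
      · exact Or.inl rfl
      · exact Or.inl rfl
    · intro v hv
      rcases hall v with rfl | rfl | rfl
      · exact hadjac.symm
      · exact hadjbc.symm
      · exact absurd rfl hv
  · have h₁ : IsNontrivialLeftIdeal S I₁ := by
      have : I₁ ∈ ({I₁, I₂} : Set (Set S)) := Set.mem_insert _ _
      rw [← hset] at this; exact this
    have h₂ : IsNontrivialLeftIdeal S I₂ := by
      have : I₂ ∈ ({I₁, I₂} : Set (Set S)) := Set.mem_insert_of_mem _ rfl
      rw [← hset] at this; exact this
    set a : {I : Set S // IsNontrivialLeftIdeal S I} := ⟨I₁, h₁⟩ with ha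
    set b : {I : Set S // IsNontrivialLeftIdeal S I} := ⟨I₂, h₂⟩ with hb
    have hne : a ≠ b := fun h => hss.ne (congrArg Subtype.val h)
    have hall : ∀ v : {I : Set S // IsNontrivialLeftIdeal S I}, v = a ∨ v = b := by
      intro v
      have hv : v.1 ∈ ({I₁, I₂} : Set (Set S)) := by rw [← hset]; exact v.2
      simp only [Set.mem_insert_iff, Set.mem_singleton_iff] at hv
      rcases hv with h | h
      · exact Or.inl (Subtype.ext h)
      · exact Or.inr (Subtype.ext h)
    obtain ⟨x₀, hx₀⟩ := h₁.1.1
    have hadjab : (idealGraph S).Adj a b := ⟨hne, ⟨x₀, hx₀, hss.1 hx₀⟩⟩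
    haveI : Nonempty {I : Set S // IsNontrivialLeftIdeal S I} := ⟨a⟩
    refine ⟨⟨?_⟩, ?_, ?_, ⟨a, ?_⟩⟩
    · intro u v
      rcases hall u with rfl | rfl <;> rcases hall v with rfl | rfl
      · exact SimpleGraph.Reachable.refl _
      · exact hadjab.reachable
      · exact hadjab.symm.reachable
      · exact SimpleGraph.Reachable.refl _
    · refine ⟨SimpleGraph.Coloring.mk (fun v => if v = a then 0 else 1) ?_⟩
      intro u v hadj
      rcases hall u with rfl | rfl <;> rcases hall v with rfl | rfl
      · exact absurd rfl hadj.ne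
      · simp [hne.symm]
      · simp [hne.symm]
      · exact absurd rfl hadj.ne
    · refine star_isAcyclic _ b ?_
      intro u v hadj
      rcases hall u with rfl | rfl <;> rcases hall v with rfl | rfl
      · exact absurd rfl hadj.ne
      · exact Or.inr rfl
      · exact Or.inl rfl
      · exact Or.inl rfl
    · intro v hv
      rcases hall v with rfl | rfl
      · exact absurd rfl hv
      · exact hadjab

lemma tf_of_acyclic {V : Type*} {G : SimpleGraph V} (h : G.IsAcyclic) :
    ∀ a b c : V, G.Adj a b → G.Adj a c → G.Adj b c → False := by
  intro a b c hab hac hbc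
  refine h (SimpleGraph.Walk.cons hab (SimpleGraph.Walk.cons hbc
    (SimpleGraph.Walk.cons hac.symm SimpleGraph.Walk.nil))) ?_
  rw [SimpleGraph.Walk.cons_isCycle_iff]
  constructor
  · simp [SimpleGraph.Walk.cons_isPath_iff, hbc.ne, hac.ne', hab.ne']
  · simp only [SimpleGraph.Walk.edges_cons, SimpleGraph.Walk.edges_nil, List.mem_cons,
      List.mem_singleton, List.not_mem_nil, or_false]
    push_neg
    constructor
    · intro h'
      rw [Sym2.eq_iff] at h'
      rcases h' with ⟨hx, -⟩ | ⟨hx, -⟩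
      · exact hab.ne hx
      · exact hac.ne hx
    · intro h'
      rw [Sym2.eq_iff] at h'
      rcases h' with ⟨hx, -⟩ | ⟨-, hx⟩
      · exact hac.ne hx
      · exact hbc.ne hx

lemma tf_of_colorable {V : Type*} {G : SimpleGraph V} (h : G.Colorable 2) :
    ∀ a b c : V, G.Adj a b → G.Adj a c → G.Adj b c → False := by
  intro a b c hab hac hbc
  obtain ⟨C⟩ := h
  have n1 : ((C a : Fin 2) : ℕ) ≠ ((C b : Fin 2) : ℕ) := fun hv => C.valid hab (Fin.ext hv)
  have n2 : ((C a : Fin 2) : ℕ) ≠ ((C c : Fin 2) : ℕ) := fun hv => C.valid hac (Fin.ext hv)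
  have n3 : ((C b : Fin 2) : ℕ) ≠ ((C c : Fin 2) : ℕ) := fun hv => C.valid hbc (Fin.ext hv)
  have l1 := (C a).isLt
  have l2 := (C b).isLt
  have l3 := (C c).isLt
  omega

end Props

/-- For a semigroup `S` with a minimal left ideal whose graph `Γ(S)` has more than one
vertex, the conditions "star graph", "tree", "connected and bipartite", and the explicit
ideal-theoretic description are all equivalent. -/
theorem idealGraph_star_tree_bipartite_iff (S : Type*) [Semigroup S]
    (hmin : ∃ I : Set S, IsMinimalLeftIdeal S I)
    (hvert : Nontrivial {I : Set S // IsNontrivialLeftIdeal S I}) :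
    (((idealGraph S).IsTree ∧ ∃ c : {I : Set S // IsNontrivialLeftIdeal S I},
        ∀ v, v ≠ c → (idealGraph S).Adj c v) ↔ (idealGraph S).IsTree)
    ∧ ((idealGraph S).IsTree ↔ (idealGraph S).Connected ∧ (idealGraph S).Colorable 2)
    ∧ ((idealGraph S).Connected ∧ (idealGraph S).Colorable 2 ↔
        ((∃ I₁ I₂ : Set S, IsMinimalLeftIdeal S I₁ ∧ IsMinimalLeftIdeal S I₂ ∧ I₁ ≠ I₂ ∧
            I₁ ∪ I₂ ≠ Set.univ ∧
            {I : Set S | IsNontrivialLeftIdeal S I} = {I₁, I₂, I₁ ∪ I₂}) ∨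
          (∃ I₁ I₂ : Set S, I₁ ⊂ I₂ ∧
            {I : Set S | IsNontrivialLeftIdeal S I} = {I₁, I₂}))) := by
  refine ⟨⟨And.left, ?_⟩, ⟨?_, ?_⟩, ⟨?_, ?_⟩⟩
  · intro ht
    have hD := tf_classification hmin hvert ht.isConnected (tf_of_acyclic ht.IsAcyclic)
    exact ⟨ht, (D_props hD).2.2.2⟩
  · intro ht
    have hD := tf_classification hmin hvert ht.isConnected (tf_of_acyclic ht.IsAcyclic)
    exact ⟨ht.isConnected, (D_props hD).2.1⟩
  · rintro ⟨hc, hcol⟩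
    have hD := tf_classification hmin hvert hc (tf_of_colorable hcol)
    exact ⟨hc, (D_props hD).2.2.1⟩
  · rintro ⟨hc, hcol⟩
    exact tf_classification hmin hvert hc (tf_of_colorable hcol)
  · intro hD
    exact ⟨(D_props hD).1, (D_props hD).2.1⟩
end

section
/- Let S be a semigroup with exactly n minimal left ideals I₁, …, Iₙ (1 ≤ n < ∞), and suppose that I₁ ∪ I₂ ∪ ⋯ ∪ Iₙ ≠ S. Then the domination number of the intersection ideal graph Γ(S) equals 1. -/
/-- A dominating set of vertices of `Γ(S)`. -/
def IsDomSet (S : Type*) [Semigroup S]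
    (D : Set {I : Set S // IsNontrivialLeftIdeal S I}) : Prop :=
  ∀ v ∉ D, ∃ u ∈ D, (idealGraph S).Adj v u

/-- The domination number of `Γ(S)`: the minimum cardinality of a dominating set. -/
noncomputable def domNumber (S : Type*) [Semigroup S] : ℕ∞ :=
  sInf {k : ℕ∞ | ∃ D : Set {I : Set S // IsNontrivialLeftIdeal S I},
    IsDomSet S D ∧ D.encard = k}

/-- If `S` has exactly `n` minimal left ideals (`1 ≤ n < ∞`) whose union is not `S`,
then the domination number of `Γ(S)` equals `1`. -/
theorem domNumber_eq_one (S : Type*) [Semigroup S] (n : ℕ) (hn : 1 ≤ n)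
    (hcard : {I : Set S | IsMinimalLeftIdeal S I}.encard = n)
    (hunion : ⋃₀ {I : Set S | IsMinimalLeftIdeal S I} ≠ Set.univ) :
    domNumber S = 1 := by
  set M := {I : Set S | IsMinimalLeftIdeal S I} with hM
  -- M is nonempty
  have hMne : M.Nonempty := by
    rw [← Set.encard_ne_zero, hcard]
    exact_mod_cast Nat.one_le_iff_ne_zero.mp hn
  obtain ⟨I₀, hI₀⟩ := hMne
  set U := ⋃₀ M with hU
  -- U is a nontrivial left ideal
  have hUideal : IsLeftIdeal S U := by
    constructor
    · obtain ⟨x, hx⟩ := hI₀.1.1.1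
      exact ⟨x, I₀, hI₀, hx⟩
    · rintro s x ⟨I, hI, hxI⟩
      exact ⟨I, hI, hI.1.1.2 s x hxI⟩
  have hUnt : IsNontrivialLeftIdeal S U := ⟨hUideal, hunion⟩
  -- every nontrivial left ideal meets U
  have key : ∀ J : Set S, IsNontrivialLeftIdeal S J → (J ∩ U).Nonempty := by
    intro J hJ
    obtain ⟨j, hj⟩ := hJ.1.1
    set K := (fun a => a * j) '' I₀ with hK
    have hKJ : K ⊆ J := by
      rintro _ ⟨a, ha, rfl⟩
      exact hJ.1.2 a j hj
    have hKideal : IsLeftIdeal S K := by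
      constructor
      · obtain ⟨a, ha⟩ := hI₀.1.1.1
        exact ⟨a * j, a, ha, rfl⟩
      · rintro s _ ⟨a, ha, rfl⟩
        exact ⟨s * a, hI₀.1.1.2 s a ha, by exact mul_assoc s a j⟩
    have hKmin : IsMinimalLeftIdeal S K := by
      refine ⟨⟨hKideal, fun h => hJ.2 (Set.eq_univ_of_univ_subset (h ▸ hKJ))⟩, ?_⟩
      intro L hL hLK
      set I' := {a ∈ I₀ | a * j ∈ L} with hI'
      have hI'ideal : IsLeftIdeal S I' := by
        constructor
        · obtain ⟨y, hy⟩ := hL.1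
          obtain ⟨a, ha, rfl⟩ := hLK.1 hy
          exact ⟨a, ha, hy⟩
        · rintro s a ⟨haI, haL⟩
          exact ⟨hI₀.1.1.2 s a haI, by rw [mul_assoc]; exact hL.2 s _ haL⟩
      have hI'sub : I' ⊆ I₀ := fun a ha => ha.1
      have hI'eq : I' = I₀ := by
        by_contra h
        exact hI₀.2 I' hI'ideal (ssubset_of_subset_of_ne hI'sub h)
      have : K ⊆ L := by
        rintro _ ⟨a, ha, rfl⟩
        exact (hI'eq ▸ ha : a ∈ I').2
      exact hLK.2 this
    obtain ⟨y, hy⟩ := hKideal.1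
    exact ⟨y, hKJ hy, K, hKmin, hy⟩
  -- the singleton {U} is a dominating set
  set u : {I : Set S // IsNontrivialLeftIdeal S I} := ⟨U, hUnt⟩ with hu
  have hDom : IsDomSet S {u} := by
    intro v hv
    refine ⟨u, rfl, fun h => hv (h ▸ rfl), ?_⟩
    exact key v.1 v.2
  have h1mem : (1 : ℕ∞) ∈ {k : ℕ∞ | ∃ D : Set {I : Set S // IsNontrivialLeftIdeal S I},
      IsDomSet S D ∧ D.encard = k} := ⟨{u}, hDom, Set.encard_singleton u⟩
  refine le_antisymm (sInf_le h1mem) (le_sInf ?_)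
  rintro k ⟨D, hD, rfl⟩
  rw [ENat.one_le_iff_ne_zero, Set.encard_ne_zero]
  rcases Set.eq_empty_or_nonempty D with rfl | h
  · obtain ⟨w, hw, -⟩ := hD u (by simp)
    exact absurd hw (by simp)
  · exact h
end

section
/- Let S be a semigroup with exactly n minimal left ideals I₁, …, Iₙ (2 ≤ n < ∞), and suppose that S = I₁ ∪ I₂ ∪ ⋯ ∪ Iₙ. Then the domination number of the intersection ideal graph Γ(S) equals 2. -/
lemma minimal_subset_of_inter {S : Type*} [Semigroup S] {I J : Set S}
    (hI : IsMinimalLeftIdeal S I) (hJ : IsLeftIdeal S J)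
    (h : (J ∩ I).Nonempty) : I ⊆ J := by
  have hint : IsLeftIdeal S (J ∩ I) :=
    ⟨h, fun s x hx => ⟨hJ.2 s x hx.1, hI.1.1.2 s x hx.2⟩⟩
  have hns := hI.2 _ hint
  rw [Set.ssubset_iff_subset_ne] at hns
  push_neg at hns
  have heq := hns Set.inter_subset_right
  intro x hx
  rw [← heq] at hx
  exact hx.1

lemma minimal_disjoint {S : Type*} [Semigroup S] {I J : Set S}
    (hI : IsMinimalLeftIdeal S I) (hJ : IsMinimalLeftIdeal S J)
    (hne : I ≠ J) : I ∩ J = ∅ := by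
  by_contra h
  rw [← Set.not_nonempty_iff_eq_empty, not_not] at h
  have h1 : J ⊆ I := minimal_subset_of_inter hJ hI.1.1 h
  have h2 : I ⊆ J := minimal_subset_of_inter hI hJ.1.1 (by rwa [Set.inter_comm])
  exact hne (Set.Subset.antisymm h2 h1)

lemma sUnion_leftIdeal {S : Type*} [Semigroup S] {F : Set (Set S)}
    (hne : (⋃₀ F).Nonempty) (h : ∀ I ∈ F, IsLeftIdeal S I) :
    IsLeftIdeal S (⋃₀ F) := by
  refine ⟨hne, ?_⟩
  rintro s x ⟨I, hIF, hxI⟩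
  exact ⟨I, hIF, (h I hIF).2 s x hxI⟩

/-- If `S` has exactly `n` minimal left ideals (`2 ≤ n < ∞`) whose union is `S`,
then the domination number of `Γ(S)` equals `2`. -/
theorem domNumber_eq_two (S : Type*) [Semigroup S] (n : ℕ) (hn : 2 ≤ n)
    (hcard : {I : Set S | IsMinimalLeftIdeal S I}.encard = n)
    (hunion : ⋃₀ {I : Set S | IsMinimalLeftIdeal S I} = Set.univ) :
    domNumber S = 2 := by
  unfold domNumber
  set M : Set (Set S) := {I : Set S | IsMinimalLeftIdeal S I} with hM
  -- there exist two distinct minimal left ideals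
  have hlt : 1 < M.encard := by
    rw [hcard]
    exact_mod_cast lt_of_lt_of_le one_lt_two hn
  rw [Set.one_lt_encard_iff] at hlt
  obtain ⟨I₁, I₂, hI₁, hI₂, h12⟩ := hlt
  have hI₁m : IsMinimalLeftIdeal S I₁ := hI₁
  have hI₂m : IsMinimalLeftIdeal S I₂ := hI₂
  -- the two big ideals
  set A : Set S := ⋃₀ (M \ {I₂}) with hA
  set B : Set S := ⋃₀ (M \ {I₁}) with hB
  have hI₁A : I₁ ⊆ A := Set.subset_sUnion_of_mem ⟨hI₁, by simpa using h12⟩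
  have hI₂B : I₂ ⊆ B := Set.subset_sUnion_of_mem ⟨hI₂, by simpa using h12.symm⟩
  have hAid : IsLeftIdeal S A :=
    sUnion_leftIdeal (hI₁m.1.1.1.mono hI₁A) (fun I hI => (hI.1 : IsMinimalLeftIdeal S I).1.1)
  have hBid : IsLeftIdeal S B :=
    sUnion_leftIdeal (hI₂m.1.1.1.mono hI₂B) (fun I hI => (hI.1 : IsMinimalLeftIdeal S I).1.1)
  -- A misses I₂, B misses I₁
  have hAmiss : ∀ x ∈ I₂, x ∉ A := by
    rintro x hx ⟨I, ⟨hIm, hIne⟩, hxI⟩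
    have hd := minimal_disjoint (hIm : IsMinimalLeftIdeal S I) hI₂m (by simpa using hIne)
    have hmem : x ∈ I ∩ I₂ := ⟨hxI, hx⟩
    rw [hd] at hmem
    exact hmem
  have hBmiss : ∀ x ∈ I₁, x ∉ B := by
    rintro x hx ⟨I, ⟨hIm, hIne⟩, hxI⟩
    have hd := minimal_disjoint (hIm : IsMinimalLeftIdeal S I) hI₁m (by simpa using hIne)
    have hmem : x ∈ I ∩ I₁ := ⟨hxI, hx⟩
    rw [hd] at hmem
    exact hmem
  obtain ⟨a, ha⟩ := hI₁m.1.1.1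
  obtain ⟨b, hb⟩ := hI₂m.1.1.1
  have hAnt : IsNontrivialLeftIdeal S A :=
    ⟨hAid, fun h => hAmiss b hb (h ▸ Set.mem_univ b)⟩
  have hBnt : IsNontrivialLeftIdeal S B :=
    ⟨hBid, fun h => hBmiss a ha (h ▸ Set.mem_univ a)⟩
  have hABne : A ≠ B := fun h => hBmiss a ha (h ▸ hI₁A ha)
  set vA : {I : Set S // IsNontrivialLeftIdeal S I} := ⟨A, hAnt⟩
  set vB : {I : Set S // IsNontrivialLeftIdeal S I} := ⟨B, hBnt⟩
  have hvne : vA ≠ vB := fun h => hABne (congrArg Subtype.val h)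
  -- {vA, vB} is a dominating set
  have hdom : IsDomSet S {vA, vB} := by
    rintro ⟨J, hJ⟩ hv
    obtain ⟨x, hx⟩ := hJ.1.1
    have hxU : x ∈ ⋃₀ M := hunion ▸ Set.mem_univ x
    obtain ⟨I, hIM, hxI⟩ := hxU
    have hvA : (⟨J, hJ⟩ : {I : Set S // IsNontrivialLeftIdeal S I}) ≠ vA :=
      fun h => hv (Or.inl h)
    have hvB : (⟨J, hJ⟩ : {I : Set S // IsNontrivialLeftIdeal S I}) ≠ vB :=
      fun h => hv (Or.inr h)
    by_cases hI2 : I = I₂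
    · refine ⟨vB, Or.inr rfl, ?_⟩
      show _ ≠ vB ∧ (J ∩ vB.1).Nonempty
      have hmem : I ∈ M \ {I₁} := ⟨hIM, by simp [hI2]; exact h12.symm⟩
      exact ⟨hvB, x, hx, Set.subset_sUnion_of_mem hmem hxI⟩
    · refine ⟨vA, Or.inl rfl, ?_⟩
      show _ ≠ vA ∧ (J ∩ vA.1).Nonempty
      have hmem : I ∈ M \ {I₂} := ⟨hIM, by simpa using hI2⟩
      exact ⟨hvA, x, hx, Set.subset_sUnion_of_mem hmem hxI⟩
  have h2mem : (2 : ℕ∞) ∈ {k : ℕ∞ | ∃ D : Set {I : Set S // IsNontrivialLeftIdeal S I},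
      IsDomSet S D ∧ D.encard = k} := ⟨{vA, vB}, hdom, Set.encard_pair hvne⟩
  refine le_antisymm (sInf_le h2mem) (le_sInf ?_)
  rintro k ⟨D, hD, rfl⟩
  -- lower bound: every dominating set has at least two elements
  rw [show (2 : ℕ∞) = 1 + 1 from rfl, ENat.add_one_le_iff (by simp)]
  rw [Set.one_lt_encard_iff]
  by_contra hnt
  push_neg at hnt
  rcases D.eq_empty_or_nonempty with hDe | ⟨w, hw⟩
  · obtain ⟨u, hu, -⟩ := hD ⟨I₁, hI₁m.1⟩ (by rw [hDe]; exact Set.notMem_empty _)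
    rw [hDe] at hu; exact Set.notMem_empty u hu
  · have hDsing : D = {w} := Set.eq_singleton_iff_unique_mem.mpr
      ⟨hw, fun x hx => hnt x w hx hw⟩
    have hall : ∀ I ∈ M, I ⊆ w.1 := by
      intro I hI
      by_cases heq : (⟨I, (hI : IsMinimalLeftIdeal S I).1⟩ :
          {I : Set S // IsNontrivialLeftIdeal S I}) = w
      · rw [← heq]
      · obtain ⟨u, hu, hadj⟩ := hD ⟨I, (hI : IsMinimalLeftIdeal S I).1⟩
          (by rw [hDsing]; simpa using heq)
        rw [hDsing, Set.mem_singleton_iff] at hu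
        subst hu
        refine minimal_subset_of_inter hI u.2.1 ?_
        obtain ⟨-, y, hy⟩ := hadj
        exact ⟨y, hy.2, hy.1⟩
    have hwu : w.1 = Set.univ := Set.eq_univ_of_univ_subset
      (hunion ▸ Set.sUnion_subset hall)
    exact w.2.2 hwu
end

section
/- Let S be a semigroup with exactly n minimal left ideals, where 1 ≤ n < ∞. Then the independence number of the intersection ideal graph Γ(S) equals n. -/
/-- The independence number of `Γ(S)`: the supremum of cardinalities of independent
sets of vertices. -/
noncomputable def indepNumber (S : Type*) [Semigroup S] : ℕ∞ :=
  sSup {k : ℕ∞ | ∃ A : Set {I : Set S // IsNontrivialLeftIdeal S I},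
    (∀ u ∈ A, ∀ v ∈ A, ¬ (idealGraph S).Adj u v) ∧ A.encard = k}

lemma min_eq_of_subset {S : Type*} [Semigroup S] {I J : Set S}
    (hI : IsMinimalLeftIdeal S I) (hJ : IsLeftIdeal S J) (hJI : J ⊆ I) : J = I := by
  by_contra h
  exact hI.2 J hJ (hJI.ssubset_of_ne h)

lemma min_disjoint {S : Type*} [Semigroup S] {I J : Set S}
    (hI : IsMinimalLeftIdeal S I) (hJ : IsMinimalLeftIdeal S J)
    (h : (I ∩ J).Nonempty) : I = J := by
  have hint : IsLeftIdeal S (I ∩ J) :=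
    ⟨h, fun s x hx => ⟨hI.1.1.2 s x hx.1, hJ.1.1.2 s x hx.2⟩⟩
  have h1 := min_eq_of_subset hI hint Set.inter_subset_left
  have h2 := min_eq_of_subset hJ hint Set.inter_subset_right
  exact h1.symm.trans h2

lemma exists_min_sub {S : Type*} [Semigroup S] {M : Set S}
    (hM : IsMinimalLeftIdeal S M) {I : Set S} (hI : IsNontrivialLeftIdeal S I) :
    ∃ N : Set S, IsMinimalLeftIdeal S N ∧ N ⊆ I := by
  obtain ⟨x, hx⟩ := hI.1.1
  refine ⟨(· * x) '' M, ?_, ?_⟩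
  · have hsub : (· * x) '' M ⊆ I := by
      rintro _ ⟨m, -, rfl⟩
      exact hI.1.2 m x hx
    have hideal : IsLeftIdeal S ((· * x) '' M) := by
      refine ⟨hM.1.1.1.image _, ?_⟩
      rintro s _ ⟨m, hm, rfl⟩
      exact ⟨s * m, hM.1.1.2 s m hm, mul_assoc s m x⟩
    refine ⟨⟨hideal, ?_⟩, ?_⟩
    · intro h
      exact hI.2 (Set.eq_univ_of_univ_subset (h ▸ hsub))
    · intro J hJ hJsub
      -- N := preimage in M
      set N : Set S := {m ∈ M | m * x ∈ J} with hN
      have hNne : N.Nonempty := by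
        obtain ⟨j, hj⟩ := hJ.1
        obtain ⟨m, hm, rfl⟩ := hJsub.1 hj
        exact ⟨m, hm, hj⟩
      have hNideal : IsLeftIdeal S N :=
        ⟨hNne, fun s m hm => ⟨hM.1.1.2 s m hm.1, by
          have := hJ.2 s (m * x) hm.2
          rwa [← mul_assoc] at this⟩⟩
      have hNM : N = M := min_eq_of_subset hM hNideal (fun m hm => hm.1)
      have : (· * x) '' M ⊆ J := by
        rintro _ ⟨m, hm, rfl⟩
        rw [← hNM] at hm
        exact hm.2
      exact hJsub.2 this
  · rintro _ ⟨m, -, rfl⟩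
    exact hI.1.2 m x hx

/-- If `S` has exactly `n` minimal left ideals (`1 ≤ n < ∞`), then the independence
number of `Γ(S)` equals `n`. -/
theorem indepNumber_eq (S : Type*) [Semigroup S] (n : ℕ) (hn : 1 ≤ n)
    (hcard : {I : Set S | IsMinimalLeftIdeal S I}.encard = n) :
    indepNumber S = n := by
  have hex : {I : Set S | IsMinimalLeftIdeal S I}.Nonempty := by
    rw [← Set.encard_ne_zero, hcard]
    exact_mod_cast Nat.one_le_iff_ne_zero.mp hn
  obtain ⟨M0, hM0⟩ := hex
  apply le_antisymm
  · apply sSup_le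
    rintro k ⟨A, hAind, rfl⟩
    have hch : ∀ v : {I : Set S // IsNontrivialLeftIdeal S I},
        ∃ N, IsMinimalLeftIdeal S N ∧ N ⊆ v.1 :=
      fun v => exists_min_sub hM0 v.2
    set f := fun v => (hch v).choose with hf
    have hinj : Set.InjOn f A := by
      intro u hu v hv huv
      by_contra hne
      apply hAind u hu v hv
      refine ⟨hne, ?_⟩
      obtain ⟨x, hx⟩ := (hch u).choose_spec.1.1.1.1
      have huv' : (hch u).choose = (hch v).choose := huv
      exact ⟨x, (hch u).choose_spec.2 hx, (hch v).choose_spec.2 (huv' ▸ hx)⟩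
    calc A.encard = (f '' A).encard := (hinj.encard_image).symm
      _ ≤ {I : Set S | IsMinimalLeftIdeal S I}.encard := by
          apply Set.encard_mono
          rintro _ ⟨v, hv, rfl⟩
          exact (hch v).choose_spec.1
      _ = n := hcard
  · apply le_sSup
    refine ⟨{v | IsMinimalLeftIdeal S v.1}, ?_, ?_⟩
    · rintro u hu v hv ⟨hne, hint⟩
      exact hne (Subtype.ext (min_disjoint hu hv hint))
    · rw [← hcard]
      have himg : Subtype.val ''
          {v : {I : Set S // IsNontrivialLeftIdeal S I} | IsMinimalLeftIdeal S v.1}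
          = {I : Set S | IsMinimalLeftIdeal S I} := by
        ext I
        constructor
        · rintro ⟨v, hv, rfl⟩; exact hv
        · intro hI; exact ⟨⟨I, hI.1⟩, hI, rfl⟩
      rw [← himg]
      exact (Set.InjOn.encard_image (Subtype.val_injective.injOn)).symm
end

section
/- Let S be a semigroup with exactly n minimal left ideals, where 3 ≤ n < ∞. Then the intersection ideal graph Γ(S) contains a clique of size n; explicitly, the n unions of (n−1) of the n minimal left ideals are pairwise adjacent nontrivial left ideals of S. -/
/-- If `S` has exactly `n` minimal left ideals `I₁, …, Iₙ` with `3 ≤ n`, then `Γ(S)`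
contains a clique of size `n`: the `n` unions of `n-1` of the minimal left ideals are
pairwise adjacent nontrivial left ideals. -/
theorem idealGraph_clique_of_minimal (S : Type*) [Semigroup S] (n : ℕ) (hn : 3 ≤ n)
    (e : Fin n → Set S) (he : Function.Injective e)
    (hmin : ∀ i, IsMinimalLeftIdeal S (e i))
    (hall : ∀ I : Set S, IsMinimalLeftIdeal S I → ∃ i, I = e i) :
    (∀ i : Fin n, IsNontrivialLeftIdeal S (⋃ j ∈ {j : Fin n | j ≠ i}, e j)) ∧
      ∀ i i' : Fin n, i ≠ i' →
        (⋃ j ∈ {j : Fin n | j ≠ i}, e j) ≠ (⋃ j ∈ {j : Fin n | j ≠ i'}, e j) ∧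
        ((⋃ j ∈ {j : Fin n | j ≠ i}, e j) ∩ (⋃ j ∈ {j : Fin n | j ≠ i'}, e j)).Nonempty := by
  -- disjointness of distinct minimal ideals
  have hdisj : ∀ i j : Fin n, i ≠ j → e i ∩ e j = ∅ := by
    intro i j hij
    by_contra h
    have hne : (e i ∩ e j).Nonempty := Set.nonempty_iff_ne_empty.mpr h
    have hli : IsLeftIdeal S (e i ∩ e j) := by
      refine ⟨hne, ?_⟩
      rintro s x ⟨hxi, hxj⟩
      exact ⟨(hmin i).1.1.2 s x hxi, (hmin j).1.1.2 s x hxj⟩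
    have hsubi : e i ∩ e j ⊆ e i := Set.inter_subset_left
    have hsubj : e i ∩ e j ⊆ e j := Set.inter_subset_right
    have heqi : e i ∩ e j = e i := by
      by_contra h'
      exact (hmin i).2 _ hli ⟨hsubi, fun hh => h' (Set.Subset.antisymm hsubi hh)⟩
    have heqj : e i ∩ e j = e j := by
      by_contra h'
      exact (hmin j).2 _ hli ⟨hsubj, fun hh => h' (Set.Subset.antisymm hsubj hh)⟩
    exact hij (he (heqi ▸ heqj))
  -- the unions are nontrivial left ideals
  have hnontriv : ∀ i : Fin n, IsNontrivialLeftIdeal S (⋃ j ∈ {j : Fin n | j ≠ i}, e j) := by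
    intro i
    -- pick some k ≠ i
    obtain ⟨k, hk⟩ : ∃ k : Fin n, k ≠ i := by
      haveI : Nontrivial (Fin n) := Fin.nontrivial_iff_two_le.mpr (by omega)
      exact exists_ne i
    constructor
    · constructor
      · obtain ⟨x, hx⟩ := (hmin k).1.1.1
        exact ⟨x, Set.mem_biUnion hk hx⟩
      · intro s x hx
        obtain ⟨j, hj, hxj⟩ := Set.mem_iUnion₂.mp hx
        exact Set.mem_biUnion hj ((hmin j).1.1.2 s x hxj)
    · intro huniv
      obtain ⟨x, hx⟩ := (hmin i).1.1.1
      have : x ∈ ⋃ j ∈ {j : Fin n | j ≠ i}, e j := huniv ▸ Set.mem_univ x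
      obtain ⟨j, hj, hxj⟩ := Set.mem_iUnion₂.mp this
      have h0 := hdisj j i hj
      have hmem2 : x ∈ e j ∩ e i := ⟨hxj, hx⟩
      rw [h0] at hmem2
      exact hmem2
  refine ⟨hnontriv, ?_⟩
  intro i i' hii'
  constructor
  · intro heq
    obtain ⟨x, hx⟩ := (hmin i').1.1.1
    have hmem : x ∈ ⋃ j ∈ {j : Fin n | j ≠ i}, e j := Set.mem_biUnion (Ne.symm (Ne.symm hii'.symm)) hx
    rw [heq] at hmem
    obtain ⟨j, hj, hxj⟩ := Set.mem_iUnion₂.mp hmem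
    have h0 := hdisj j i' hj
    have hmem2 : x ∈ e j ∩ e i' := ⟨hxj, hx⟩
    rw [h0] at hmem2
    exact hmem2
  · -- pick k ≠ i, k ≠ i'
    obtain ⟨k, hki, hki'⟩ : ∃ k : Fin n, k ≠ i ∧ k ≠ i' := by
      have hle : ({i, i'} : Finset (Fin n)).card ≤ 2 :=
        (Finset.card_insert_le _ _).trans (by simp)
      have hne : ({i, i'} : Finset (Fin n)) ≠ Finset.univ := by
        intro h
        have := congrArg Finset.card h
        rw [Finset.card_univ, Fintype.card_fin] at this
        omega
      obtain ⟨k, -, hk⟩ := Finset.exists_of_ssubset (Finset.ssubset_univ_iff.mpr hne)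
      simp only [Finset.mem_insert, Finset.mem_singleton, not_or] at hk
      exact ⟨k, hk.1, hk.2⟩
    obtain ⟨x, hx⟩ := (hmin k).1.1.1
    exact ⟨x, Set.mem_biUnion hki hx, Set.mem_biUnion hki' hx⟩
end

section
/- Let S be a semigroup. If the intersection ideal graph Γ(S) is connected, then the set of maximal left ideals of S forms a clique in Γ(S); that is, any two distinct maximal left ideals of S have nonempty intersection. -/
/-- If `Γ(S)` is connected, then the maximal left ideals of `S` form a clique: any two
distinct maximal left ideals intersect. -/
theorem maximal_ideals_clique (S : Type*) [Semigroup S]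
    (h : (idealGraph S).Connected) :
    ∀ J K : Set S, IsMaximalLeftIdeal S J → IsMaximalLeftIdeal S K → J ≠ K →
      (J ∩ K).Nonempty := by
  intro J K hJ hK hne
  by_contra hcon
  rw [Set.not_nonempty_iff_eq_empty] at hcon
  have hKdisj : ∀ x ∈ K, x ∉ J := fun x hxK hxJ =>
    Set.eq_empty_iff_forall_notMem.mp hcon x ⟨hxJ, hxK⟩
  have hunion : ∀ A B : Set S, IsLeftIdeal S A → IsLeftIdeal S B →
      IsLeftIdeal S (A ∪ B) := by
    intro A B hA hB
    refine ⟨Set.Nonempty.mono Set.subset_union_left hA.1, ?_⟩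
    rintro s x (hx | hx)
    · exact Or.inl (hA.2 s x hx)
    · exact Or.inr (hB.2 s x hx)
  have maxUnion : ∀ M L : Set S, IsMaximalLeftIdeal S M → IsLeftIdeal S L →
      (L \ M).Nonempty → M ∪ L = Set.univ := by
    rintro M L hM hL ⟨y, hyL, hyM⟩
    by_contra hMU
    exact hM.2 _ ⟨hunion _ _ hM.1.1 hL, hMU⟩
      ((Set.ssubset_iff_of_subset Set.subset_union_left).mpr ⟨y, Or.inr hyL, hyM⟩)
  obtain ⟨k, hk⟩ := hK.1.1.1
  have hJK : J ∪ K = Set.univ :=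
    maxUnion J K hJ hK.1.1 ⟨k, hk, hKdisj k hk⟩
  -- the walk lemma
  have walkLem : ∀ (a b : {I : Set S // IsNontrivialLeftIdeal S I})
      (w : (idealGraph S).Walk a b), (a.1 ∩ J).Nonempty → (b.1 ∩ J) = ∅ →
      ∃ L : Set S, IsNontrivialLeftIdeal S L ∧ (L ∩ J).Nonempty ∧ (L ∩ K).Nonempty := by
    intro a b w
    induction w with
    | nil =>
      intro h1 h2
      rw [h2] at h1
      exact absurd h1 (by simp)
    | @cons u v w' hadj p ih =>
      intro h1 h2
      by_cases hc : (v.1 ∩ J).Nonempty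
      · exact ih hc h2
      · have hvK : v.1 ⊆ K := by
          intro x hx
          have hx2 : x ∈ J ∪ K := hJK ▸ Set.mem_univ x
          rcases hx2 with hxJ | hxK
          · exact absurd ⟨x, hx, hxJ⟩ hc
          · exact hxK
        obtain ⟨y, hyu, hyv⟩ := hadj.2
        exact ⟨u.1, u.2, h1, ⟨y, hyu, hvK hyv⟩⟩
  obtain ⟨j, hj⟩ := hJ.1.1.1
  obtain ⟨w⟩ := h.preconnected ⟨J, hJ.1⟩ ⟨K, hK.1⟩
  obtain ⟨L, hL, ⟨x, hxL, hxJ⟩, ⟨y, hyL, hyK⟩⟩ :=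
    walkLem _ _ w ⟨j, hj, hj⟩ (by rw [Set.inter_comm]; exact hcon)
  have hJL : J ∪ L = Set.univ := maxUnion J L hJ hL.1 ⟨y, hyL, hKdisj y hyK⟩
  have hKL : K ⊆ L := by
    intro z hz
    have hz2 : z ∈ J ∪ L := hJL ▸ Set.mem_univ z
    rcases hz2 with hzJ | hzL
    · exact absurd hzJ (hKdisj z hz)
    · exact hzL
  exact hK.2 L hL ((Set.ssubset_iff_of_subset hKL).mpr
    ⟨x, hxL, fun hxK => hKdisj x hxK hxJ⟩)
end

section
/- Let S be a semigroup and let K be a maximal left ideal of S whose degree in the intersection ideal graph Γ(S) is finite. Then the chromatic number of Γ(S) is finite. -/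
/-- If `K` is a maximal left ideal of `S` of finite degree in `Γ(S)`, then the chromatic
number of `Γ(S)` is finite. -/
theorem chromaticNumber_lt_top_of_maximal (S : Type*) [Semigroup S] (K : Set S)
    (hK : IsMaximalLeftIdeal S K)
    (hdeg : ((idealGraph S).neighborSet ⟨K, hK.1⟩).Finite) :
    (idealGraph S).chromaticNumber ≠ ⊤ := by
  have hfin : Finite {I : Set S // IsNontrivialLeftIdeal S I} := by
    rw [← Set.finite_univ_iff]
    apply Set.Finite.subset
      (Set.Finite.insert ⟨K, hK.1⟩
        (Set.Finite.union hdeg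
          (Set.Subsingleton.finite (s := {I : {I : Set S // IsNontrivialLeftIdeal S I} | I.1 = Kᶜ})
            (fun a ha b hb => Subtype.ext (ha.trans hb.symm)))))
    rintro ⟨I, hI⟩ -
    by_cases hIK : I = K
    · exact Set.mem_insert_iff.mpr (Or.inl (Subtype.ext hIK))
    right
    have hKI : IsLeftIdeal S (K ∪ I) := by
      refine ⟨hK.1.1.1.mono Set.subset_union_left, ?_⟩
      rintro s x (hx | hx)
      · exact Or.inl (hK.1.1.2 s x hx)
      · exact Or.inr (hI.1.2 s x hx)
    rcases eq_or_ne (K ∪ I) Set.univ with huniv | hne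
    · by_cases hdisj : (I ∩ K).Nonempty
      · exact Or.inl ⟨fun h => hIK (congrArg Subtype.val h).symm, by
          rwa [Set.inter_comm] at hdisj⟩
      · right
        show I = Kᶜ
        ext x
        constructor
        · intro hx hxK
          exact hdisj ⟨x, hx, hxK⟩
        · intro hx
          have : x ∈ K ∪ I := huniv ▸ Set.mem_univ x
          exact this.resolve_left hx
    · have hsub : I ⊆ K := by
        by_contra h
        exact hK.2 (K ∪ I) ⟨hKI, hne⟩
          ⟨Set.subset_union_left, fun hs => h (fun x hx => hs (Or.inr hx))⟩
      obtain ⟨x, hx⟩ := hI.1.1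
      exact Or.inl ⟨fun h => hIK (congrArg Subtype.val h).symm, ⟨x, hsub hx, hx⟩⟩
  have : Fintype {I : Set S // IsNontrivialLeftIdeal S I} := Fintype.ofFinite _
  rw [SimpleGraph.chromaticNumber_ne_top_iff_exists]
  exact ⟨_, (idealGraph S).colorable_of_fintype⟩
end

section
/- Let S be a semigroup that is the union of its n minimal left ideals, where 3 ≤ n < ∞. Then the metric dimension of the intersection ideal graph Γ(S) equals 2 if n = 3, and equals n if n ≥ 4. -/
/-- A resolving set of `Γ(S)`: every pair of distinct vertices is resolved by some
vertex of the set. -/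
def IsResolvingSet (S : Type*) [Semigroup S]
    (R : Set {I : Set S // IsNontrivialLeftIdeal S I}) : Prop :=
  ∀ x y : {I : Set S // IsNontrivialLeftIdeal S I}, x ≠ y →
    ∃ z ∈ R, (idealGraph S).dist x z ≠ (idealGraph S).dist y z

/-- The metric dimension of `Γ(S)`: the minimum cardinality of a resolving set. -/
noncomputable def metricDim (S : Type*) [Semigroup S] : ℕ∞ :=
  sInf {k : ℕ∞ | ∃ R : Set {I : Set S // IsNontrivialLeftIdeal S I},
    IsResolvingSet S R ∧ R.encard = k}

namespace MDAux

open Set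

/-- The vertex type of the ideal graph. -/
abbrev Vtx (S : Type*) [Semigroup S] := {I : Set S // IsNontrivialLeftIdeal S I}

variable {S : Type*} [Semigroup S]

/-- The support of an ideal: the minimal left ideals contained in it. -/
def supp (S : Type*) [Semigroup S] (I : Set S) : Set (Set S) :=
  {M | IsMinimalLeftIdeal S M ∧ M ⊆ I}

/-- The union of all minimal left ideals other than `M`. -/
def compIdeal (S : Type*) [Semigroup S] (M : Set S) : Set S :=
  ⋃₀ ({I : Set S | IsMinimalLeftIdeal S I} \ {M})

lemma leftIdeal_inter {I J : Set S} (hI : IsLeftIdeal S I) (hJ : IsLeftIdeal S J)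
    (h : (I ∩ J).Nonempty) : IsLeftIdeal S (I ∩ J) :=
  ⟨h, fun s x hx => ⟨hI.2 s x hx.1, hJ.2 s x hx.2⟩⟩

lemma min_subset_of_inter {M I : Set S} (hM : IsMinimalLeftIdeal S M)
    (hI : IsLeftIdeal S I) (h : (I ∩ M).Nonempty) : M ⊆ I := by
  have h1 : IsLeftIdeal S (I ∩ M) := leftIdeal_inter hI hM.1.1 h
  have h3 : I ∩ M ⊆ M := inter_subset_right
  have heq : I ∩ M = M := by
    by_contra hne
    exact hM.2 _ h1 (ssubset_iff_subset_ne.2 ⟨h3, hne⟩)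
  intro x hx; rw [← heq] at hx; exact hx.1

lemma min_eq_of_inter {M M' : Set S} (hM : IsMinimalLeftIdeal S M)
    (hM' : IsMinimalLeftIdeal S M') (h : (M ∩ M').Nonempty) : M = M' := by
  have h1 : M' ⊆ M := min_subset_of_inter hM' hM.1.1 h
  have h2 : M ⊆ M' := min_subset_of_inter hM hM'.1.1 (by rwa [inter_comm] at h)
  exact subset_antisymm h2 h1

lemma supp_subset (I : Set S) : supp S I ⊆ {K : Set S | IsMinimalLeftIdeal S K} :=
  fun _ h => h.1

lemma supp_sUnion {A : Set (Set S)} (hA : ∀ M ∈ A, IsMinimalLeftIdeal S M) :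
    supp S (⋃₀ A) = A := by
  apply subset_antisymm
  · rintro M ⟨hMmin, hsub⟩
    obtain ⟨x, hx⟩ := hMmin.1.1.1
    obtain ⟨M', hM', hxM'⟩ := hsub hx
    have : M = M' := min_eq_of_inter hMmin (hA _ hM') ⟨x, hx, hxM'⟩
    rwa [this]
  · intro M hM
    exact ⟨hA _ hM, subset_sUnion_of_mem hM⟩

lemma supp_min {M : Set S} (hM : IsMinimalLeftIdeal S M) : supp S M = {M} := by
  have := supp_sUnion (S := S) (A := {M}) (by rintro K rfl; exact hM)
  rwa [sUnion_singleton] at this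

lemma supp_compIdeal (M : Set S) :
    supp S (compIdeal S M) = {I : Set S | IsMinimalLeftIdeal S I} \ {M} :=
  supp_sUnion (fun _ hK => hK.1)

lemma sUnion_nontrivial {A : Set (Set S)} (hA : ∀ M ∈ A, IsMinimalLeftIdeal S M)
    (hne : A.Nonempty) {M0 : Set S} (hM0 : IsMinimalLeftIdeal S M0) (hM0A : M0 ∉ A) :
    IsNontrivialLeftIdeal S (⋃₀ A) := by
  obtain ⟨M, hM⟩ := hne
  refine ⟨⟨?_, ?_⟩, ?_⟩
  · obtain ⟨x, hx⟩ := (hA _ hM).1.1.1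
    exact ⟨x, M, hM, hx⟩
  · rintro s x ⟨K, hK, hxK⟩
    exact ⟨K, hK, (hA _ hK).1.1.2 s x hxK⟩
  · intro h
    obtain ⟨m, hm⟩ := hM0.1.1.1
    have : m ∈ ⋃₀ A := by rw [h]; exact mem_univ m
    obtain ⟨K, hK, hmK⟩ := this
    exact hM0A (min_eq_of_inter hM0 (hA _ hK) ⟨m, hm, hmK⟩ ▸ hK)

lemma encard_pair_le {α : Type*} (a b : α) : ({a, b} : Set α).encard ≤ 2 := by
  refine le_trans (Set.encard_insert_le _ _) ?_
  rw [Set.encard_singleton]; norm_num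

lemma encard_triple_le {α : Type*} (a b c : α) : ({a, b, c} : Set α).encard ≤ 3 := by
  refine le_trans (Set.encard_insert_le _ _) ?_
  refine le_trans (add_le_add_left (encard_pair_le b c) 1) ?_
  norm_num

lemma exists_extra {n : ℕ}
    (hcard : {I : Set S | IsMinimalLeftIdeal S I}.encard = n)
    {A : Set (Set S)} (hA : A.encard < (n : ℕ∞)) :
    ∃ c, IsMinimalLeftIdeal S c ∧ c ∉ A := by
  by_contra h
  push_neg at h
  have hsub : {I : Set S | IsMinimalLeftIdeal S I} ⊆ A := fun I hI => h I hI
  have := Set.encard_mono hsub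
  rw [hcard] at this
  exact absurd (this.trans_lt hA) (lt_irrefl _)

section WithUnion

variable (hu : ⋃₀ {I : Set S | IsMinimalLeftIdeal S I} = Set.univ)
include hu

lemma exists_min_mem (x : S) : ∃ M, IsMinimalLeftIdeal S M ∧ x ∈ M := by
  have hx : x ∈ ⋃₀ {I : Set S | IsMinimalLeftIdeal S I} := by rw [hu]; exact mem_univ x
  obtain ⟨M, hM, hxM⟩ := hx
  exact ⟨M, hM, hxM⟩

lemma eq_sUnion_supp {I : Set S} (hI : IsLeftIdeal S I) : I = ⋃₀ supp S I := by
  apply subset_antisymm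
  · intro x hx
    obtain ⟨M, hM, hxM⟩ := exists_min_mem hu x
    have hsub : M ⊆ I := min_subset_of_inter hM hI ⟨x, hx, hxM⟩
    exact ⟨M, ⟨hM, hsub⟩, hxM⟩
  · exact sUnion_subset fun M hM => hM.2

lemma supp_nonempty {I : Set S} (hI : IsLeftIdeal S I) : (supp S I).Nonempty := by
  obtain ⟨x, hx⟩ := hI.1
  obtain ⟨M, hM, hxM⟩ := exists_min_mem hu x
  exact ⟨M, hM, min_subset_of_inter hM hI ⟨x, hx, hxM⟩⟩

lemma exists_supp_ne (z : Vtx S) {M : Set S} (hzM : z.1 ≠ M) :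
    ∃ K, K ∈ supp S z.1 ∧ K ≠ M := by
  by_contra h
  push_neg at h
  have hsub : supp S z.1 ⊆ {M} := fun K hK => h K hK
  obtain ⟨K, hK⟩ := supp_nonempty hu z.2.1
  have hsupp : supp S z.1 = {M} := by
    rcases subset_singleton_iff_eq.1 hsub with he | he
    · exact absurd (he ▸ hK) (notMem_empty K)
    · exact he
  apply hzM
  rw [eq_sUnion_supp hu z.2.1, hsupp, sUnion_singleton]

lemma inter_compIdeal_nonempty (z : Vtx S) {M : Set S} (hzM : z.1 ≠ M) :
    (compIdeal S M ∩ z.1).Nonempty := by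
  obtain ⟨K, hKsupp, hKM⟩ := exists_supp_ne hu z hzM
  have hKsub : K ⊆ compIdeal S M := subset_sUnion_of_mem ⟨hKsupp.1, hKM⟩
  obtain ⟨k, hk⟩ := hKsupp.1.1.1.1
  exact ⟨k, hKsub hk, hKsupp.2 hk⟩

end WithUnion

lemma dist_eq_one_of {x z : Vtx S}
    (hne : x ≠ z) (h : (x.1 ∩ z.1).Nonempty) : (idealGraph S).dist x z = 1 :=
  SimpleGraph.dist_eq_one_iff_adj.2 ⟨hne, h⟩

lemma dist_le_one_of {x z : Vtx S}
    (h : (x.1 ∩ z.1).Nonempty) : (idealGraph S).dist x z ≤ 1 := by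
  by_cases hne : x = z
  · rw [hne, SimpleGraph.dist_self]; omega
  · rw [dist_eq_one_of hne h]

lemma dist_eq_two {x y z : Vtx S}
    (hxy : x ≠ y) (hinter : x.1 ∩ y.1 = ∅)
    (hxz : (idealGraph S).Adj x z) (hzy : (idealGraph S).Adj z y) :
    (idealGraph S).dist x y = 2 := by
  have h2 : (idealGraph S).dist x y ≤ 2 := by
    have := SimpleGraph.dist_le
      (SimpleGraph.Walk.cons hxz (SimpleGraph.Walk.cons hzy SimpleGraph.Walk.nil))
    simpa using this
  have h0 : 0 < (idealGraph S).dist x y :=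
    SimpleGraph.Reachable.pos_dist_of_ne ⟨SimpleGraph.Walk.cons hxz hzy.toWalk⟩ hxy
  have h1 : (idealGraph S).dist x y ≠ 1 := by
    intro h
    obtain ⟨-, hne⟩ := SimpleGraph.dist_eq_one_iff_adj.1 h
    rw [hinter] at hne
    exact hne.ne_empty rfl
  omega

section Main

variable (hu : ⋃₀ {I : Set S | IsMinimalLeftIdeal S I} = Set.univ) {n : ℕ}
  (hn3 : 3 ≤ n) (hcard : {I : Set S | IsMinimalLeftIdeal S I}.encard = n)
include hu hn3 hcard

lemma dist_two_of_disjoint {x y : Vtx S} (hxy : x ≠ y)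
    (h : x.1 ∩ y.1 = ∅) : (idealGraph S).dist x y = 2 := by
  obtain ⟨M, hMmin, hMx⟩ := supp_nonempty hu x.2.1
  obtain ⟨K, hKmin, hKy⟩ := supp_nonempty hu y.2.1
  obtain ⟨m, hm⟩ := hMmin.1.1.1
  obtain ⟨k, hk⟩ := hKmin.1.1.1
  have hMK : M ≠ K := by
    rintro rfl
    have : m ∈ x.1 ∩ y.1 := ⟨hMx hm, hKy hm⟩
    rw [h] at this; exact this
  have hpair : ∀ L ∈ ({M, K} : Set (Set S)), IsMinimalLeftIdeal S L := by
    rintro L (rfl | rfl) <;> assumption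
  obtain ⟨c, hcmin, hc⟩ := exists_extra hcard (A := {M, K})
    (lt_of_le_of_lt (encard_pair_le M K) (by exact_mod_cast (by omega : 2 < n)))
  have hnt : IsNontrivialLeftIdeal S (⋃₀ ({M, K} : Set (Set S))) :=
    sUnion_nontrivial hpair ⟨M, by simp⟩ hcmin hc
  set z : Vtx S := ⟨⋃₀ ({M, K} : Set (Set S)), hnt⟩ with hz
  have hMz : M ⊆ z.1 := subset_sUnion_of_mem (by simp)
  have hKz : K ⊆ z.1 := subset_sUnion_of_mem (by simp)
  have hxz : (idealGraph S).Adj x z := by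
    refine ⟨?_, ⟨m, hMx hm, hMz hm⟩⟩
    intro hxez
    have : k ∈ x.1 ∩ y.1 := ⟨by rw [hxez]; exact hKz hk, hKy hk⟩
    rw [h] at this; exact this
  have hzy : (idealGraph S).Adj z y := by
    refine ⟨?_, ⟨k, hKz hk, hKy hk⟩⟩
    intro hzey
    have : m ∈ x.1 ∩ y.1 := ⟨hMx hm, by rw [← hzey]; exact hMz hm⟩
    rw [h] at this; exact this
  exact dist_eq_two hxy h hxz hzy

lemma compIdeal_nontrivial {M : Set S} (hM : IsMinimalLeftIdeal S M) :
    IsNontrivialLeftIdeal S (compIdeal S M) := by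
  obtain ⟨c, hcmin, hc⟩ := exists_extra hcard (A := {M})
    (by rw [Set.encard_singleton]; exact_mod_cast (by omega : 1 < n))
  exact sUnion_nontrivial (fun _ hK => hK.1) ⟨c, hcmin, hc⟩ hM (fun h => h.2 rfl)

lemma compIdeal_ne_min {M M' : Set S} (hM : IsMinimalLeftIdeal S M)
    (hM' : IsMinimalLeftIdeal S M') : compIdeal S M ≠ M' := by
  intro h
  have hs : {I : Set S | IsMinimalLeftIdeal S I} \ {M} = {M'} := by
    rw [← supp_compIdeal (S := S) M, h, supp_min hM']
  obtain ⟨c1, hc1min, hc1⟩ := exists_extra hcard (A := {M})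
    (by rw [Set.encard_singleton]; exact_mod_cast (by omega : 1 < n))
  obtain ⟨c2, hc2min, hc2⟩ := exists_extra hcard (A := {M, c1})
    (lt_of_le_of_lt (encard_pair_le M c1) (by exact_mod_cast (by omega : 2 < n)))
  have hm1 : c1 ∈ ({M'} : Set (Set S)) := hs ▸ ⟨hc1min, hc1⟩
  have hm2 : c2 ∈ ({M'} : Set (Set S)) := hs ▸ ⟨hc2min, fun hc => hc2 (Or.inl hc)⟩
  apply hc2
  right
  rw [hm2, ← hm1]
  rfl

lemma compIdeal_inj {M M' : Set S} (hM : IsMinimalLeftIdeal S M)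
    (hM' : IsMinimalLeftIdeal S M') (h : compIdeal S M = compIdeal S M') : M = M' := by
  by_contra hne
  have hs : {I : Set S | IsMinimalLeftIdeal S I} \ {M} =
      {I : Set S | IsMinimalLeftIdeal S I} \ {M'} := by
    rw [← supp_compIdeal (S := S) M, h, supp_compIdeal]
  have : M' ∈ {I : Set S | IsMinimalLeftIdeal S I} \ {M} := ⟨hM', fun hc => hne (hc.symm)⟩
  rw [hs] at this
  exact this.2 rfl

lemma resolver_cases {M M' : Set S}
    (hM : IsMinimalLeftIdeal S M) (hM' : IsMinimalLeftIdeal S M')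
    {vM vM' z : Vtx S} (hvM : vM.1 = compIdeal S M) (hvM' : vM'.1 = compIdeal S M')
    (hd : (idealGraph S).dist vM z ≠ (idealGraph S).dist vM' z) :
    z.1 = M ∨ z.1 = compIdeal S M ∨ z.1 = M' ∨ z.1 = compIdeal S M' := by
  by_contra hcon
  push_neg at hcon
  obtain ⟨hz1, hz2, hz3, hz4⟩ := hcon
  apply hd
  have d1 : (idealGraph S).dist vM z = 1 := by
    refine dist_eq_one_of (fun h => hz2 (h ▸ hvM)) ?_
    rw [hvM]
    exact inter_compIdeal_nonempty hu z hz1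
  have d2 : (idealGraph S).dist vM' z = 1 := by
    refine dist_eq_one_of (fun h => hz4 (h ▸ hvM')) ?_
    rw [hvM']
    exact inter_compIdeal_nonempty hu z hz3
  rw [d1, d2]

lemma resolves_of_xor {x y z : Vtx S} {M : Set S} (hM : IsMinimalLeftIdeal S M)
    (hz : z.1 = M) (hx : M ⊆ x.1) (hy : ¬ M ⊆ y.1) :
    (idealGraph S).dist x z ≠ (idealGraph S).dist y z := by
  obtain ⟨m, hm⟩ := hM.1.1.1
  have h1 : (idealGraph S).dist x z ≤ 1 := dist_le_one_of ⟨m, hx hm, hz ▸ hm⟩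
  have hyz : y ≠ z := by
    intro h
    exact hy (by rw [h, hz])
  have hinter : y.1 ∩ z.1 = ∅ := by
    by_contra hne
    rw [← Ne, ← Set.nonempty_iff_ne_empty] at hne
    rw [hz] at hne
    exact hy (min_subset_of_inter hM y.2.1 hne)
  have h2 : (idealGraph S).dist y z = 2 := dist_two_of_disjoint hu hn3 hcard hyz hinter
  omega

lemma resolve_single {x y : Vtx S} {M : Set S} (hM : IsMinimalLeftIdeal S M)
    (hxM : M ∈ supp S x.1) (hyM : M ∉ supp S y.1) :
    (idealGraph S).dist x ⟨M, hM.1⟩ ≠ (idealGraph S).dist y ⟨M, hM.1⟩ :=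
  resolves_of_xor hu hn3 hcard hM rfl hxM.2 (fun h => hyM ⟨hM, h⟩)

lemma upper_min : IsResolvingSet S {v : Vtx S | IsMinimalLeftIdeal S v.1} := by
  intro x y hxy
  have hval : x.1 ≠ y.1 := fun h => hxy (Subtype.ext h)
  have hsupp : supp S x.1 ≠ supp S y.1 := by
    intro h
    exact hval (by rw [eq_sUnion_supp hu x.2.1, h, ← eq_sUnion_supp hu y.2.1])
  by_cases hss : supp S x.1 ⊆ supp S y.1
  · have : ¬ supp S y.1 ⊆ supp S x.1 := fun h => hsupp (subset_antisymm hss h)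
    obtain ⟨M, hMy, hMx⟩ := not_subset.1 this
    exact ⟨⟨M, hMy.1.1⟩, hMy.1, (resolve_single hu hn3 hcard hMy.1 hMy hMx).symm⟩
  · obtain ⟨M, hMx, hMy⟩ := not_subset.1 hss
    exact ⟨⟨M, hMx.1.1⟩, hMx.1, resolve_single hu hn3 hcard hMx.1 hMx hMy⟩

omit hu hn3 hcard in
lemma encard_min_vtx :
    {v : Vtx S | IsMinimalLeftIdeal S v.1}.encard
      = {I : Set S | IsMinimalLeftIdeal S I}.encard := by
  have himg : Subtype.val '' {v : Vtx S | IsMinimalLeftIdeal S v.1}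
      = {I : Set S | IsMinimalLeftIdeal S I} := by
    ext I
    constructor
    · rintro ⟨v, hv, rfl⟩; exact hv
    · intro hI; exact ⟨⟨I, hI.1⟩, hI, rfl⟩
  rw [← himg, Subtype.val_injective.encard_image _]

lemma upper3_aux {M1 M2 M3 : Set S}
    (hm1 : IsMinimalLeftIdeal S M1) (hm2 : IsMinimalLeftIdeal S M2)
    (hMn : {I : Set S | IsMinimalLeftIdeal S I} = {M1, M2, M3})
    {x y : Vtx S} (hxy : x ≠ y)
    (h1 : M1 ∈ supp S x.1 ↔ M1 ∈ supp S y.1)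
    (h2 : M2 ∈ supp S x.1 ↔ M2 ∈ supp S y.1)
    (hx3 : M3 ∈ supp S x.1) (hy3 : M3 ∉ supp S y.1) :
    ∃ z ∈ ({⟨M1, hm1.1⟩, ⟨M2, hm2.1⟩} : Set (Vtx S)),
      (idealGraph S).dist x z ≠ (idealGraph S).dist y z := by
  by_cases hx1 : M1 ∈ supp S x.1
  · by_cases hx2 : M2 ∈ supp S x.1
    · exfalso
      apply x.2.2
      apply Set.eq_univ_of_univ_subset
      rw [← hu]
      apply sUnion_subset
      intro K hK
      rw [hMn] at hK
      rcases hK with rfl | rfl | rfl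
      · exact hx1.2
      · exact hx2.2
      · exact hx3.2
    · have hy1 : M1 ∈ supp S y.1 := h1.1 hx1
      have hy2 : M2 ∉ supp S y.1 := fun h => hx2 (h2.2 h)
      have hsy : supp S y.1 = {M1} := by
        apply subset_antisymm
        · intro K hK
          have hKmem : K ∈ ({M1, M2, M3} : Set (Set S)) := hMn ▸ hK.1
          rcases hKmem with rfl | rfl | rfl
          · rfl
          · exact absurd hK hy2
          · exact absurd hK hy3
        · rintro K rfl; exact hy1
      have hyz : y = (⟨M1, hm1.1⟩ : Vtx S) := by
        apply Subtype.ext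
        rw [eq_sUnion_supp hu y.2.1, hsy, sUnion_singleton]
      obtain ⟨m, hm⟩ := hm1.1.1.1
      have hd : (idealGraph S).dist x y = 1 := dist_eq_one_of hxy ⟨m, hx1.2 hm, hy1.2 hm⟩
      refine ⟨⟨M1, hm1.1⟩, by simp, ?_⟩
      rw [← hyz, hd, SimpleGraph.dist_self]
      omega
  · by_cases hx2 : M2 ∈ supp S x.1
    · have hy1 : M1 ∉ supp S y.1 := fun h => hx1 (h1.2 h)
      have hy2 : M2 ∈ supp S y.1 := h2.1 hx2
      have hsy : supp S y.1 = {M2} := by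
        apply subset_antisymm
        · intro K hK
          have hKmem : K ∈ ({M1, M2, M3} : Set (Set S)) := hMn ▸ hK.1
          rcases hKmem with rfl | rfl | rfl
          · exact absurd hK hy1
          · rfl
          · exact absurd hK hy3
        · rintro K rfl; exact hy2
      have hyz : y = (⟨M2, hm2.1⟩ : Vtx S) := by
        apply Subtype.ext
        rw [eq_sUnion_supp hu y.2.1, hsy, sUnion_singleton]
      obtain ⟨m, hm⟩ := hm2.1.1.1
      have hd : (idealGraph S).dist x y = 1 := dist_eq_one_of hxy ⟨m, hx2.2 hm, hy2.2 hm⟩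
      refine ⟨⟨M2, hm2.1⟩, by simp, ?_⟩
      rw [← hyz, hd, SimpleGraph.dist_self]
      omega
    · exfalso
      have hy1 : M1 ∉ supp S y.1 := fun h => hx1 (h1.2 h)
      have hy2 : M2 ∉ supp S y.1 := fun h => hx2 (h2.2 h)
      obtain ⟨K, hK⟩ := supp_nonempty hu y.2.1
      have hKmem : K ∈ ({M1, M2, M3} : Set (Set S)) := hMn ▸ hK.1
      rcases hKmem with rfl | rfl | rfl
      · exact hy1 hK
      · exact hy2 hK
      · exact hy3 hK

end Main

section Three

variable (hu : ⋃₀ {I : Set S | IsMinimalLeftIdeal S I} = Set.univ)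
  (hcard3 : {I : Set S | IsMinimalLeftIdeal S I}.encard = (3 : ℕ))
include hu hcard3

lemma upper3 : ∃ R : Set (Vtx S), IsResolvingSet S R ∧ R.encard = 2 := by
  obtain ⟨M1, M2, M3, h12, h13, h23, hMn⟩ := Set.encard_eq_three.1
    (by rw [hcard3]; norm_num)
  have hm1 : IsMinimalLeftIdeal S M1 := by
    have : M1 ∈ {I : Set S | IsMinimalLeftIdeal S I} := by rw [hMn]; simp
    exact this
  have hm2 : IsMinimalLeftIdeal S M2 := by
    have : M2 ∈ {I : Set S | IsMinimalLeftIdeal S I} := by rw [hMn]; simp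
    exact this
  have hn3 : 3 ≤ 3 := le_refl 3
  refine ⟨({⟨M1, hm1.1⟩, ⟨M2, hm2.1⟩} : Set (Vtx S)), ?_, ?_⟩
  · intro x y hxy
    have hval : x.1 ≠ y.1 := fun h => hxy (Subtype.ext h)
    have hsupp : supp S x.1 ≠ supp S y.1 := by
      intro h
      exact hval (by rw [eq_sUnion_supp hu x.2.1, h, ← eq_sUnion_supp hu y.2.1])
    by_cases h1 : (M1 ∈ supp S x.1 ↔ M1 ∈ supp S y.1)
    · by_cases h2 : (M2 ∈ supp S x.1 ↔ M2 ∈ supp S y.1)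
      · have h3 : ¬ (M3 ∈ supp S x.1 ↔ M3 ∈ supp S y.1) := by
          intro h3
          apply hsupp
          ext K
          constructor
          · intro hK
            have hKmem : K ∈ ({M1, M2, M3} : Set (Set S)) := hMn ▸ hK.1
            rcases hKmem with rfl | rfl | rfl
            · exact h1.1 hK
            · exact h2.1 hK
            · exact h3.1 hK
          · intro hK
            have hKmem : K ∈ ({M1, M2, M3} : Set (Set S)) := hMn ▸ hK.1
            rcases hKmem with rfl | rfl | rfl
            · exact h1.2 hK
            · exact h2.2 hK
            · exact h3.2 hK
        by_cases hx3 : M3 ∈ supp S x.1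
        · have hy3 : M3 ∉ supp S y.1 := fun h => h3 (iff_of_true hx3 h)
          exact upper3_aux hu hn3 hcard3 hm1 hm2 hMn hxy h1 h2 hx3 hy3
        · have hy3 : M3 ∈ supp S y.1 := by
            by_contra h; exact h3 (iff_of_false hx3 h)
          obtain ⟨z, hz, hd⟩ :=
            upper3_aux hu hn3 hcard3 hm1 hm2 hMn hxy.symm h1.symm h2.symm hy3 hx3
          exact ⟨z, hz, hd.symm⟩
      · by_cases hx2 : M2 ∈ supp S x.1
        · have hy2 : M2 ∉ supp S y.1 := fun h => h2 (iff_of_true hx2 h)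
          exact ⟨⟨M2, hm2.1⟩, by simp, resolve_single hu hn3 hcard3 hm2 hx2 hy2⟩
        · have hy2 : M2 ∈ supp S y.1 := by
            by_contra h; exact h2 (iff_of_false hx2 h)
          exact ⟨⟨M2, hm2.1⟩, by simp, (resolve_single hu hn3 hcard3 hm2 hy2 hx2).symm⟩
    · by_cases hx1 : M1 ∈ supp S x.1
      · have hy1 : M1 ∉ supp S y.1 := fun h => h1 (iff_of_true hx1 h)
        exact ⟨⟨M1, hm1.1⟩, by simp, resolve_single hu hn3 hcard3 hm1 hx1 hy1⟩
      · have hy1 : M1 ∈ supp S y.1 := by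
          by_contra h; exact h1 (iff_of_false hx1 h)
        exact ⟨⟨M1, hm1.1⟩, by simp, (resolve_single hu hn3 hcard3 hm1 hy1 hx1).symm⟩
  · exact Set.encard_pair (fun h => h12 (congrArg Subtype.val h))

lemma lower3 {R : Set (Vtx S)} (hR : IsResolvingSet S R) : 2 ≤ R.encard := by
  by_contra hlt
  push_neg at hlt
  have hone : ∀ a ∈ R, ∀ b ∈ R, a = b := by
    intro a ha b hb
    by_contra hab
    have h1 : (1 : ℕ∞) < R.encard := Set.one_lt_encard_iff.2 ⟨a, b, ha, hb, hab⟩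
    have h2 := (ENat.add_one_le_iff (by norm_num : (1 : ℕ∞) ≠ ⊤)).2 h1
    rw [(by norm_num : (1 : ℕ∞) + 1 = 2)] at h2
    exact absurd h2 (not_le.2 hlt)
  obtain ⟨M1, M2, M3, h12, h13, h23, hMn⟩ := Set.encard_eq_three.1
    (by rw [hcard3]; norm_num)
  have hm1 : IsMinimalLeftIdeal S M1 := by
    have : M1 ∈ {I : Set S | IsMinimalLeftIdeal S I} := by rw [hMn]; simp
    exact this
  have hm2 : IsMinimalLeftIdeal S M2 := by
    have : M2 ∈ {I : Set S | IsMinimalLeftIdeal S I} := by rw [hMn]; simp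
    exact this
  have hm3 : IsMinimalLeftIdeal S M3 := by
    have : M3 ∈ {I : Set S | IsMinimalLeftIdeal S I} := by rw [hMn]; simp
    exact this
  have hn3 : 3 ≤ 3 := le_refl 3
  set v1 : Vtx S := ⟨compIdeal S M1, compIdeal_nontrivial hu hn3 hcard3 hm1⟩ with hv1
  set v2 : Vtx S := ⟨compIdeal S M2, compIdeal_nontrivial hu hn3 hcard3 hm2⟩ with hv2
  set v3 : Vtx S := ⟨compIdeal S M3, compIdeal_nontrivial hu hn3 hcard3 hm3⟩ with hv3
  obtain ⟨za, haR, had⟩ := hR v1 v2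
    (fun h => h12 (compIdeal_inj hu hn3 hcard3 hm1 hm2 (congrArg Subtype.val h)))
  obtain ⟨zb, hbR, hbd⟩ := hR v1 v3
    (fun h => h13 (compIdeal_inj hu hn3 hcard3 hm1 hm3 (congrArg Subtype.val h)))
  obtain ⟨zc, hcR, hcd⟩ := hR v2 v3
    (fun h => h23 (compIdeal_inj hu hn3 hcard3 hm2 hm3 (congrArg Subtype.val h)))
  have eb : zb = za := hone _ hbR _ haR
  have ec : zc = za := hone _ hcR _ haR
  subst eb
  subst ec
  have P12 := resolver_cases hu hn3 hcard3 hm1 hm2 rfl rfl had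
  have P13 := resolver_cases hu hn3 hcard3 hm1 hm3 rfl rfl hbd
  have P23 := resolver_cases hu hn3 hcard3 hm2 hm3 rfl rfl hcd
  rcases P12 with h | h | h | h
  · rcases P23 with h' | h' | h' | h'
    · exact h12 (h.symm.trans h')
    · exact compIdeal_ne_min hu hn3 hcard3 hm2 hm1 (h'.symm.trans h)
    · exact h13 (h.symm.trans h')
    · exact compIdeal_ne_min hu hn3 hcard3 hm3 hm1 (h'.symm.trans h)
  · rcases P23 with h' | h' | h' | h'
    · exact compIdeal_ne_min hu hn3 hcard3 hm1 hm2 (h.symm.trans h')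
    · exact h12 (compIdeal_inj hu hn3 hcard3 hm1 hm2 (h.symm.trans h'))
    · exact compIdeal_ne_min hu hn3 hcard3 hm1 hm3 (h.symm.trans h')
    · exact h13 (compIdeal_inj hu hn3 hcard3 hm1 hm3 (h.symm.trans h'))
  · rcases P13 with h' | h' | h' | h'
    · exact h12 (h'.symm.trans h)
    · exact compIdeal_ne_min hu hn3 hcard3 hm1 hm2 (h'.symm.trans h)
    · exact h23 (h.symm.trans h')
    · exact compIdeal_ne_min hu hn3 hcard3 hm3 hm2 (h'.symm.trans h)
  · rcases P13 with h' | h' | h' | h'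
    · exact compIdeal_ne_min hu hn3 hcard3 hm2 hm1 (h.symm.trans h')
    · exact h12 (compIdeal_inj hu hn3 hcard3 hm2 hm1 (h.symm.trans h')).symm
    · exact compIdeal_ne_min hu hn3 hcard3 hm2 hm3 (h.symm.trans h')
    · exact h23 (compIdeal_inj hu hn3 hcard3 hm2 hm3 (h.symm.trans h'))

end Three

section Four

variable (hu : ⋃₀ {I : Set S | IsMinimalLeftIdeal S I} = Set.univ) {n : ℕ}
  (hn4 : 4 ≤ n) (hcard : {I : Set S | IsMinimalLeftIdeal S I}.encard = n)
include hu hn4 hcard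

lemma lower_ge {R : Set (Vtx S)} (hR : IsResolvingSet S R) : (n : ℕ∞) ≤ R.encard := by
  classical
  by_contra hlt
  push_neg at hlt
  have hn3 : 3 ≤ n := by omega
  set R' : Set (Set S) := Subtype.val '' R with hR'def
  have hcR' : R'.encard = R.encard := Subtype.val_injective.encard_image R
  have hltR' : R'.encard < (n : ℕ∞) := by rw [hcR']; exact hlt
  have hfin : R'.Finite := Set.finite_of_encard_le_coe (le_of_lt hltR')
  set U : Set (Set S) :=
    {M | IsMinimalLeftIdeal S M ∧ (M ∈ R' ∨ compIdeal S M ∈ R')} with hUdef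
  have claim1 : ∀ M M' : Set S, IsMinimalLeftIdeal S M → IsMinimalLeftIdeal S M' →
      M ≠ M' → M ∈ U ∨ M' ∈ U := by
    intro M M' hM hM' hne
    have hvne : (⟨compIdeal S M, compIdeal_nontrivial hu hn3 hcard hM⟩ : Vtx S)
        ≠ ⟨compIdeal S M', compIdeal_nontrivial hu hn3 hcard hM'⟩ := by
      intro h
      exact hne (compIdeal_inj hu hn3 hcard hM hM' (congrArg Subtype.val h))
    obtain ⟨z, hzR, hzd⟩ := hR _ _ hvne
    have hz' : z.1 ∈ R' := ⟨z, hzR, rfl⟩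
    rcases resolver_cases hu hn3 hcard hM hM' rfl rfl hzd with h | h | h | h
    · exact Or.inl ⟨hM, Or.inl (h ▸ hz')⟩
    · exact Or.inl ⟨hM, Or.inr (h ▸ hz')⟩
    · exact Or.inr ⟨hM', Or.inl (h ▸ hz')⟩
    · exact Or.inr ⟨hM', Or.inr (h ▸ hz')⟩
  set f : Set S → Set S := fun M => if M ∈ R' then M else compIdeal S M with hfdef
  have hfpos : ∀ M, M ∈ R' → f M = M := fun M h => if_pos h
  have hfneg : ∀ M, M ∉ R' → f M = compIdeal S M := fun M h => if_neg h
  have hmaps : Set.MapsTo f U R' := by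
    intro M hM
    by_cases h : M ∈ R'
    · rw [hfpos M h]; exact h
    · rw [hfneg M h]; exact hM.2.resolve_left h
  have hinj : Set.InjOn f U := by
    intro M hM M' hM' heq
    by_cases h1 : M ∈ R' <;> by_cases h2 : M' ∈ R'
    · rwa [hfpos M h1, hfpos M' h2] at heq
    · rw [hfpos M h1, hfneg M' h2] at heq
      exact absurd heq.symm (compIdeal_ne_min hu hn3 hcard hM'.1 hM.1)
    · rw [hfneg M h1, hfpos M' h2] at heq
      exact absurd heq (compIdeal_ne_min hu hn3 hcard hM.1 hM'.1)
    · rw [hfneg M h1, hfneg M' h2] at heq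
      exact compIdeal_inj hu hn3 hcard hM.1 hM'.1 heq
  have hUle : U.encard ≤ R'.encard := Set.encard_le_encard_of_injOn hmaps hinj
  obtain ⟨M0, hM0, hM0U⟩ := exists_extra hcard (A := U) (lt_of_le_of_lt hUle hltR')
  have hUeq : U = {I : Set S | IsMinimalLeftIdeal S I} \ {M0} := by
    apply subset_antisymm
    · intro M hM
      exact ⟨hM.1, fun h => hM0U (h ▸ hM)⟩
    · rintro M ⟨hMmin, hMne⟩
      exact (claim1 M M0 hMmin hM0 (fun he => hMne he)).resolve_right hM0U
  have hUcard : U.encard = (n : ℕ∞) - 1 := by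
    rw [hUeq, Set.encard_diff_singleton_of_mem (show M0 ∈ {I : Set S | IsMinimalLeftIdeal S I} from hM0), hcard]
  have hle1 : R'.encard ≤ (n : ℕ∞) - 1 := by
    have hne : R'.encard ≠ ⊤ := ne_top_of_lt hltR'
    exact (ENat.addLECancellable_of_ne_top (by norm_num : (1:ℕ∞) ≠ ⊤)).le_tsub_of_add_le_right
      ((ENat.add_one_le_iff hne).2 hltR')
  have himg : f '' U = R' := by
    apply (hfin.subset hmaps.image_subset).eq_of_subset_of_encard_le (hmaps.image_subset)
    rw [hinj.encard_image, hUcard]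
    exact hle1
  have hMnotU : ∀ M ∈ U, M ≠ M0 := fun M hM h => hM0U (h ▸ hM)
  have noBoth : ∀ M ∈ U, ¬ (M ∈ R' ∧ compIdeal S M ∈ R') := by
    rintro M hMU ⟨hq1, hq2⟩
    rw [← himg] at hq2
    obtain ⟨M'', hM''U, hfM''⟩ := hq2
    by_cases hc : M'' ∈ R'
    · rw [hfpos M'' hc] at hfM''
      exact compIdeal_ne_min hu hn3 hcard hMU.1 hM''U.1 hfM''.symm
    · rw [hfneg M'' hc] at hfM''
      have heqM : M'' = M := compIdeal_inj hu hn3 hcard hM''U.1 hMU.1 hfM''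
      exact hc (by rw [heqM]; exact hq1)
  by_cases hcase : ∃ b ∈ U, compIdeal S b ∈ R'
  · obtain ⟨b, hbU, hbc⟩ := hcase
    have hbmin := hbU.1
    have hbM0 : b ≠ M0 := hMnotU b hbU
    have hbR' : b ∉ R' := fun h => noBoth b hbU ⟨h, hbc⟩
    obtain ⟨c, hcmin, hcnot⟩ := exists_extra hcard (A := {M0, b})
      (lt_of_le_of_lt (encard_pair_le M0 b) (by exact_mod_cast (by omega : 2 < n)))
    have hpair : ∀ L ∈ ({M0, b} : Set (Set S)), IsMinimalLeftIdeal S L := by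
      rintro L (rfl | rfl) <;> assumption
    have hynt : IsNontrivialLeftIdeal S (⋃₀ ({M0, b} : Set (Set S))) :=
      sUnion_nontrivial hpair ⟨M0, by simp⟩ hcmin hcnot
    set x : Vtx S := ⟨M0, hM0.1⟩ with hxdef
    set y : Vtx S := ⟨⋃₀ ({M0, b} : Set (Set S)), hynt⟩ with hydef
    have hsuppy : supp S y.1 = {M0, b} := supp_sUnion hpair
    have hsuppx : supp S x.1 = {M0} := supp_min hM0
    have hxy : x ≠ y := by
      intro h
      have hb' : b ∈ supp S x.1 := by rw [h, hsuppy]; simp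
      rw [hsuppx] at hb'
      exact hbM0 hb'
    obtain ⟨z, hzR, hzd⟩ := hR x y hxy
    apply hzd
    have hz' : z.1 ∈ R' := ⟨z, hzR, rfl⟩
    rw [← himg] at hz'
    obtain ⟨M, hMU, hfM⟩ := hz'
    have hMmin := hMU.1
    have hMM0 : M ≠ M0 := hMnotU M hMU
    by_cases hMR : M ∈ R'
    · rw [hfpos M hMR] at hfM
      have hzM : z.1 = M := hfM.symm
      have hMb : M ≠ b := fun h => hbR' (h ▸ hMR)
      have hxz : x ≠ z := by
        intro h
        exact hMM0 (by rw [← hzM, ← h])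
      have hxint : x.1 ∩ z.1 = ∅ := by
        rw [Set.eq_empty_iff_forall_notMem]
        rintro m ⟨h1, h2⟩
        rw [hzM] at h2
        exact hMM0 (min_eq_of_inter hMmin hM0 ⟨m, h2, h1⟩)
      have hyz : y ≠ z := by
        intro h
        have hm0' : M0 ∈ supp S z.1 := by rw [← h, hsuppy]; simp
        rw [hzM, supp_min hMmin] at hm0'
        exact hMM0 hm0'.symm
      have hyint : y.1 ∩ z.1 = ∅ := by
        rw [Set.eq_empty_iff_forall_notMem]
        rintro m ⟨h1, h2⟩
        obtain ⟨L, hL, hmL⟩ := h1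
        rw [hzM] at h2
        have heqL : L = M := min_eq_of_inter (hpair L hL) hMmin ⟨m, hmL, h2⟩
        rcases hL with rfl | rfl
        · exact hMM0 heqL.symm
        · exact hMb heqL.symm
      rw [dist_two_of_disjoint hu hn3 hcard hxz hxint,
          dist_two_of_disjoint hu hn3 hcard hyz hyint]
    · rw [hfneg M hMR] at hfM
      have hzM : z.1 = compIdeal S M := hfM.symm
      obtain ⟨m0, hm0⟩ := hM0.1.1.1
      have hM0sub : M0 ⊆ compIdeal S M :=
        subset_sUnion_of_mem ⟨hM0, fun h => hMM0 h.symm⟩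
      have hxz : x ≠ z := by
        intro h
        apply compIdeal_ne_min hu hn3 hcard hMmin hM0
        rw [← hzM, ← h]
      have hyz : y ≠ z := by
        intro h
        obtain ⟨c4, hc4min, hc4not⟩ := exists_extra hcard (A := {M, M0, b})
          (lt_of_le_of_lt (encard_triple_le M M0 b) (by exact_mod_cast (by omega : 3 < n)))
        have hc4z : c4 ∈ supp S z.1 := by
          rw [hzM, supp_compIdeal]
          exact ⟨hc4min, fun hc => hc4not (Or.inl hc)⟩
        rw [← h, hsuppy] at hc4z
        rcases hc4z with rfl | rfl
        · exact hc4not (Or.inr (Or.inl rfl))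
        · exact hc4not (Or.inr (Or.inr rfl))
      rw [dist_eq_one_of hxz ⟨m0, hm0, by rw [hzM]; exact hM0sub hm0⟩,
          dist_eq_one_of hyz
            ⟨m0, subset_sUnion_of_mem (by simp) hm0, by rw [hzM]; exact hM0sub hm0⟩]
  · push_neg at hcase
    have hallR : ∀ M ∈ U, M ∈ R' := fun M hM => hM.2.resolve_right (hcase M hM)
    obtain ⟨j, hjmin, hjnot⟩ := exists_extra hcard (A := {M0})
      (by rw [Set.encard_singleton]; exact_mod_cast (by omega : 1 < n))
    obtain ⟨k, hkmin, hknot⟩ := exists_extra hcard (A := {M0, j})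
      (lt_of_le_of_lt (encard_pair_le M0 j) (by exact_mod_cast (by omega : 2 < n)))
    have hjM0 : j ≠ M0 := fun h => hjnot h
    have hkM0 : k ≠ M0 := fun h => hknot (Or.inl h)
    have hkj : k ≠ j := fun h => hknot (Or.inr h)
    have hpair : ∀ L ∈ ({j, k} : Set (Set S)), IsMinimalLeftIdeal S L := by
      rintro L (rfl | rfl) <;> assumption
    have htrip : ∀ L ∈ ({j, k, M0} : Set (Set S)), IsMinimalLeftIdeal S L := by
      rintro L (rfl | rfl | rfl) <;> assumption
    have hxnt : IsNontrivialLeftIdeal S (⋃₀ ({j, k} : Set (Set S))) :=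
      sUnion_nontrivial hpair ⟨j, by simp⟩ hM0
        (by rintro (h | h); exacts [hjM0 h.symm, hkM0 h.symm])
    obtain ⟨c4, hc4min, hc4not⟩ := exists_extra hcard (A := {j, k, M0})
      (lt_of_le_of_lt (encard_triple_le j k M0) (by exact_mod_cast (by omega : 3 < n)))
    have hynt : IsNontrivialLeftIdeal S (⋃₀ ({j, k, M0} : Set (Set S))) :=
      sUnion_nontrivial htrip ⟨j, by simp⟩ hc4min hc4not
    set x : Vtx S := ⟨⋃₀ ({j, k} : Set (Set S)), hxnt⟩ with hxdef
    set y : Vtx S := ⟨⋃₀ ({j, k, M0} : Set (Set S)), hynt⟩ with hydef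
    have hsuppx : supp S x.1 = {j, k} := supp_sUnion hpair
    have hsuppy : supp S y.1 = {j, k, M0} := supp_sUnion htrip
    have hxy : x ≠ y := by
      intro h
      have hm0' : M0 ∈ supp S x.1 := by rw [h, hsuppy]; simp
      rw [hsuppx] at hm0'
      rcases hm0' with h' | h'
      · exact hjM0 h'.symm
      · exact hkM0 h'.symm
    obtain ⟨z, hzR, hzd⟩ := hR x y hxy
    apply hzd
    have hz' : z.1 ∈ R' := ⟨z, hzR, rfl⟩
    rw [← himg] at hz'
    obtain ⟨M, hMU, hfM⟩ := hz'
    rw [hfpos M (hallR M hMU)] at hfM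
    have hzM : z.1 = M := hfM.symm
    have hMmin := hMU.1
    have hMM0 : M ≠ M0 := hMnotU M hMU
    have hxz : x ≠ z := by
      intro h
      have hj' : j ∈ supp S z.1 := by rw [← h, hsuppx]; simp
      have hk' : k ∈ supp S z.1 := by rw [← h, hsuppx]; simp
      rw [hzM, supp_min hMmin] at hj' hk'
      exact hkj (hk'.trans hj'.symm)
    have hyz : y ≠ z := by
      intro h
      have hj' : j ∈ supp S z.1 := by rw [← h, hsuppy]; simp
      have hk' : k ∈ supp S z.1 := by rw [← h, hsuppy]; simp
      rw [hzM, supp_min hMmin] at hj' hk'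
      exact hkj (hk'.trans hj'.symm)
    obtain ⟨m, hm⟩ := hMmin.1.1.1
    by_cases hMjk : M = j ∨ M = k
    · have hMx : M ⊆ x.1 := subset_sUnion_of_mem (by rcases hMjk with rfl | rfl <;> simp)
      have hMy : M ⊆ y.1 := subset_sUnion_of_mem (by rcases hMjk with rfl | rfl <;> simp)
      rw [dist_eq_one_of hxz ⟨m, hMx hm, by rw [hzM]; exact hm⟩,
          dist_eq_one_of hyz ⟨m, hMy hm, by rw [hzM]; exact hm⟩]
    · push_neg at hMjk
      have hxint : x.1 ∩ z.1 = ∅ := by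
        rw [Set.eq_empty_iff_forall_notMem]
        rintro m' ⟨h1, h2⟩
        obtain ⟨L, hL, hmL⟩ := h1
        rw [hzM] at h2
        have heqL : L = M := min_eq_of_inter (hpair L hL) hMmin ⟨m', hmL, h2⟩
        rcases hL with rfl | rfl
        · exact hMjk.1 heqL.symm
        · exact hMjk.2 heqL.symm
      have hyint : y.1 ∩ z.1 = ∅ := by
        rw [Set.eq_empty_iff_forall_notMem]
        rintro m' ⟨h1, h2⟩
        obtain ⟨L, hL, hmL⟩ := h1
        rw [hzM] at h2
        have heqL : L = M := min_eq_of_inter (htrip L hL) hMmin ⟨m', hmL, h2⟩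
        rcases hL with rfl | rfl | rfl
        · exact hMjk.1 heqL.symm
        · exact hMjk.2 heqL.symm
        · exact hMM0 heqL.symm
      rw [dist_two_of_disjoint hu hn3 hcard hxz hxint,
          dist_two_of_disjoint hu hn3 hcard hyz hyint]

end Four

end MDAux

/-- If `S` is the union of its `n` minimal left ideals (`3 ≤ n < ∞`), then the metric
dimension of `Γ(S)` is `2` when `n = 3` and `n` when `n ≥ 4`. -/
theorem metricDim_eq (S : Type*) [Semigroup S] (n : ℕ) (hn : 3 ≤ n)
    (hcard : {I : Set S | IsMinimalLeftIdeal S I}.encard = n)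
    (hunion : ⋃₀ {I : Set S | IsMinimalLeftIdeal S I} = Set.univ) :
    (n = 3 → metricDim S = 2) ∧ (4 ≤ n → metricDim S = n) := by
  constructor
  · intro h3
    subst h3
    unfold metricDim
    obtain ⟨R, hres, hR2⟩ := MDAux.upper3 hunion hcard
    apply le_antisymm
    · exact sInf_le ⟨R, hres, hR2⟩
    · refine le_sInf ?_
      rintro k ⟨R', hres', rfl⟩
      exact MDAux.lower3 hunion hcard hres'
  · intro h4
    unfold metricDim
    apply le_antisymm
    · refine sInf_le ⟨_, MDAux.upper_min hunion hn hcard, ?_⟩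
      rw [MDAux.encard_min_vtx, hcard]
    · refine le_sInf ?_
      rintro k ⟨R', hres', rfl⟩
      exact MDAux.lower_ge hunion h4 hcard hres'
end

section
/- Let S be a semigroup that is the union of its n minimal left ideals, where 2 ≤ n < ∞. Then the automorphism group of the intersection ideal graph Γ(S) is isomorphic to the symmetric group Sₙ of degree n; in particular, |Aut(Γ(S))| = n!. -/
/-- The automorphism group of `Γ(S)`, i.e. the graph self-isomorphisms of `Γ(S)` under
composition. -/
instance idealGraphAutGroup (S : Type*) [Semigroup S] :
    Group ((idealGraph S) ≃g (idealGraph S)) where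
  mul f g := g.trans f
  one := SimpleGraph.Iso.refl
  inv := SimpleGraph.Iso.symm
  mul_assoc f g h := rfl
  one_mul f := rfl
  mul_one f := rfl
  inv_mul_cancel f := by
    have : f.trans f.symm = (SimpleGraph.Iso.refl : (idealGraph S) ≃g (idealGraph S)) := by
      exact DFunLike.ext _ _ fun v => f.toEquiv.symm_apply_apply v
    exact this

namespace IdealGraphAut

abbrev KV (n : ℕ) := {A : Finset (Fin n) // A.Nonempty ∧ A ≠ Finset.univ}

def KG (n : ℕ) : SimpleGraph (KV n) where
  Adj A B := A ≠ B ∧ (A.1 ∩ B.1).Nonempty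
  symm := by constructor; rintro A B ⟨h1, h2⟩; exact ⟨h1.symm, by rwa [Finset.inter_comm]⟩
  loopless := by constructor; rintro A ⟨h1, -⟩; exact h1 rfl

variable {n : ℕ}

lemma card_lt (A : KV n) : A.1.card < n := by
  have := (Finset.card_lt_iff_ne_univ A.1).mpr A.2.2
  simpa using this

open Classical in
noncomputable def nn (A : KV n) : Finset (KV n) :=
  Finset.univ.filter (fun C => ¬ (KG n).Adj A C)

open Classical in
lemma mem_nn {A C : KV n} : C ∈ nn A ↔ C = A ∨ A.1 ∩ C.1 = ∅ := by
  rw [nn, Finset.mem_filter]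
  simp only [Finset.mem_univ, true_and, KG]
  constructor
  · intro h
    by_cases hC : C = A
    · exact Or.inl hC
    · right
      by_contra hne
      exact h ⟨fun hh => hC hh.symm, Finset.nonempty_iff_ne_empty.mpr hne⟩
  · rintro (rfl | h) ⟨h1, h2⟩
    · exact h1 rfl
    · rw [h] at h2; exact Finset.not_nonempty_empty h2

lemma card_nn (A : KV n) : (nn A).card = 2 ^ (n - A.1.card) := by
  classical
  have key : (nn A).card = (A.1ᶜ).powerset.card := by
    refine Finset.card_nbij' (fun C => if C = A then ∅ else C.1)
      (fun B => if h : B.Nonempty ∧ B ≠ Finset.univ then ⟨B, h⟩ else A) ?_ ?_ ?_ ?_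
    · intro C hC
      rcases mem_nn.mp hC with rfl | h
      · simp
      · simp only [Finset.mem_coe, Finset.mem_powerset]
        by_cases hCA : C = A
        · simp [hCA]
        · simp only [if_neg hCA]
          intro x hx
          rw [Finset.mem_compl]
          intro hxA
          have hxm : x ∈ A.1 ∩ C.1 := Finset.mem_inter_of_mem hxA hx
          rw [h] at hxm
          exact Finset.notMem_empty x hxm
    · intro B hB
      simp only [Finset.mem_coe, Finset.mem_powerset] at hB
      dsimp only
      by_cases hBne : B.Nonempty
      · have hBu : B ≠ Finset.univ := by
          intro h
          obtain ⟨a, ha⟩ := A.2.1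
          have : a ∈ B := h ▸ Finset.mem_univ a
          exact (Finset.mem_compl.mp (hB this)) ha
        rw [dif_pos ⟨hBne, hBu⟩]
        apply mem_nn.mpr
        right
        rw [Finset.eq_empty_iff_forall_notMem]
        intro x hx
        rw [Finset.mem_inter] at hx
        exact (Finset.mem_compl.mp (hB hx.2)) hx.1
      · rw [Finset.not_nonempty_iff_eq_empty] at hBne
        subst hBne
        rw [dif_neg (by simp)]
        exact mem_nn.mpr (Or.inl rfl)
    · intro C hC
      dsimp only
      by_cases hCA : C = A
      · subst hCA
        rw [if_pos rfl, dif_neg (by simp)]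
      · rw [if_neg hCA, dif_pos C.2]
    · intro B hB
      simp only [Finset.mem_coe, Finset.mem_powerset] at hB
      dsimp only
      by_cases hBne : B.Nonempty
      · have hBu : B ≠ Finset.univ := by
          intro h
          obtain ⟨a, ha⟩ := A.2.1
          have : a ∈ B := h ▸ Finset.mem_univ a
          exact (Finset.mem_compl.mp (hB this)) ha
        rw [dif_pos ⟨hBne, hBu⟩, if_neg]
        intro h
        obtain ⟨a, ha⟩ := A.2.1
        have : a ∈ B := by rw [show B = A.1 from congrArg Subtype.val h]; exact ha
        exact (Finset.mem_compl.mp (hB this)) ha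
      · rw [Finset.not_nonempty_iff_eq_empty] at hBne
        subst hBne
        rw [dif_neg (by simp), if_pos rfl]
  rw [key, Finset.card_powerset, Finset.card_compl]
  simp

lemma card_map (g : KG n ≃g KG n) (A : KV n) : (g A).1.card = A.1.card := by
  classical
  have h1 : nn (g A) = (nn A).image g := by
    ext C
    simp only [Finset.mem_image]
    constructor
    · intro hC
      refine ⟨g.symm C, ?_, g.apply_symm_apply C⟩
      simp only [nn, Finset.mem_filter, Finset.mem_univ, true_and] at hC ⊢
      intro hadj
      exact hC (by simpa using g.map_adj_iff.mpr hadj)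
    · rintro ⟨D, hD, rfl⟩
      simp only [nn, Finset.mem_filter, Finset.mem_univ, true_and] at hD ⊢
      intro hadj
      exact hD (g.map_adj_iff.mp hadj)
  have h2 : (nn (g A)).card = (nn A).card := by
    rw [h1, Finset.card_image_of_injective _ (RelIso.injective g)]
  rw [card_nn, card_nn] at h2
  have h3 := Nat.pow_right_injective (le_refl 2) h2
  have h4 := card_lt A
  have h5 := card_lt (g A)
  omega

def sv (hn : 2 ≤ n) (i : Fin n) : KV n :=
  ⟨{i}, Finset.singleton_nonempty i, by
    intro h
    have := congrArg Finset.card h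
    simp at this
    omega⟩

lemma exists_perm (hn : 2 ≤ n) (g : KG n ≃g KG n) :
    ∃ σ : Equiv.Perm (Fin n), ∀ A : KV n, (g A).1 = A.1.image σ := by
  classical
  have hcard1 : ∀ i : Fin n, ∃ j, (g (sv hn i)).1 = {j} := by
    intro i
    apply Finset.card_eq_one.mp
    rw [card_map g]
    simp [sv]
  choose p hp using hcard1
  have pinj : Function.Injective p := by
    intro i j h
    have h1 : g (sv hn i) = g (sv hn j) := by
      apply Subtype.ext
      rw [hp, hp, h]
    have := g.toEquiv.injective h1
    have := congrArg Subtype.val this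
    simpa [sv] using this
  have main : ∀ A : KV n, (g A).1 = A.1.image p := by
    intro A
    have sub : A.1.image p ⊆ (g A).1 := by
      intro y hy
      obtain ⟨i, hi, rfl⟩ := Finset.mem_image.mp hy
      by_cases hA : A = sv hn i
      · subst hA; rw [hp]; exact Finset.mem_singleton_self _
      · have hadj : (KG n).Adj (sv hn i) A := by
          refine ⟨fun h => hA h.symm, ⟨i, ?_⟩⟩
          simp [sv, hi]
        have hadj2 : (KG n).Adj (g (sv hn i)) (g A) := g.map_adj_iff.mpr hadj
        obtain ⟨x, hx⟩ := hadj2.2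
        rw [Finset.mem_inter, hp, Finset.mem_singleton] at hx
        rw [← hx.1]
        exact hx.2
    have hc : (g A).1.card ≤ (A.1.image p).card := by
      rw [Finset.card_image_of_injective _ pinj, card_map]
    exact (Finset.eq_of_subset_of_card_le sub hc).symm
  refine ⟨Equiv.ofBijective p (Finite.injective_iff_bijective.mp pinj), ?_⟩
  intro A
  rw [main A]
  rfl

def vmap (σ : Equiv.Perm (Fin n)) (A : KV n) : KV n :=
  ⟨A.1.image σ, A.2.1.image σ, by
    intro h
    have h1 : (A.1.image σ).card = A.1.card := Finset.card_image_of_injective _ σ.injective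
    have h2 := card_lt A
    rw [h] at h1
    simp [Finset.card_univ] at h1
    omega⟩

lemma vmap_vmap (σ τ : Equiv.Perm (Fin n)) (A : KV n) :
    vmap σ (vmap τ A) = vmap (σ * τ) A := by
  apply Subtype.ext
  simp [vmap, Finset.image_image, Function.comp]

lemma vmap_id (A : KV n) : vmap 1 A = A := by
  apply Subtype.ext
  simp [vmap]

def vIso (σ : Equiv.Perm (Fin n)) : KG n ≃g KG n where
  toFun := vmap σ
  invFun := vmap σ⁻¹
  left_inv A := by rw [vmap_vmap]; simp [vmap_id]
  right_inv A := by rw [vmap_vmap]; simp [vmap_id]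
  map_rel_iff' := by
    intro A B
    show (KG n).Adj (vmap σ A) (vmap σ B) ↔ (KG n).Adj A B
    have vinj : Function.Injective (vmap σ : KV n → KV n) := by
      intro X Y h
      have := congrArg (vmap σ⁻¹) h
      rw [vmap_vmap, vmap_vmap] at this
      simpa [vmap_id] using this
    constructor
    · rintro ⟨h1, x, hx⟩
      refine ⟨fun h => h1 (congrArg _ h), ?_⟩
      simp only [vmap, Finset.mem_inter, Finset.mem_image] at hx
      obtain ⟨⟨a, ha, hax⟩, ⟨b, hb, hbx⟩⟩ := hx
      have : a = b := σ.injective (hax.trans hbx.symm)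
      exact ⟨a, Finset.mem_inter.mpr ⟨ha, this ▸ hb⟩⟩
    · rintro ⟨h1, x, hx⟩
      rw [Finset.mem_inter] at hx
      refine ⟨fun h => h1 (vinj h), ⟨σ x, ?_⟩⟩
      simp only [vmap, Finset.mem_inter, Finset.mem_image]
      exact ⟨⟨x, hx.1, rfl⟩, ⟨x, hx.2, rfl⟩⟩


section Semigroup

variable {S : Type*} [Semigroup S]

lemma minimal_disjoint {I J : Set S}
    (hI : IsMinimalLeftIdeal S I) (hJ : IsMinimalLeftIdeal S J) (hne : I ≠ J) :
    I ∩ J = ∅ := by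
  by_contra h
  have hIJ : IsLeftIdeal S (I ∩ J) :=
    ⟨Set.nonempty_iff_ne_empty.mpr h, fun s x hx => ⟨hI.1.1.2 s x hx.1, hJ.1.1.2 s x hx.2⟩⟩
  have h1 : I ∩ J = I := by
    by_contra hne'
    exact hI.2 _ hIJ (Set.ssubset_iff_subset_ne.mpr ⟨Set.inter_subset_left, hne'⟩)
  have h2 : I ∩ J = J := by
    by_contra hne'
    exact hJ.2 _ hIJ (Set.ssubset_iff_subset_ne.mpr ⟨Set.inter_subset_right, hne'⟩)
  exact hne (h1.symm.trans h2)

lemma minimal_absorb {M I : Set S} (hM : IsMinimalLeftIdeal S M)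
    (hI : IsLeftIdeal S I) (h : (M ∩ I).Nonempty) : M ⊆ I := by
  have hMI : IsLeftIdeal S (M ∩ I) :=
    ⟨h, fun s x hx => ⟨hM.1.1.2 s x hx.1, hI.2 s x hx.2⟩⟩
  have heq : M ∩ I = M := by
    by_contra hne'
    exact hM.2 _ hMI (Set.ssubset_iff_subset_ne.mpr ⟨Set.inter_subset_left, hne'⟩)
  intro x hx
  rw [← heq] at hx
  exact hx.2

lemma graph_iso {n : ℕ} (ι : Fin n → Set S)
    (hmin : ∀ i, IsMinimalLeftIdeal S (ι i))
    (hinj : Function.Injective ι)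
    (hcover : ∀ x : S, ∃ i, x ∈ ι i) :
    Nonempty ((idealGraph S) ≃g KG n) := by
  classical
  have huniq : ∀ i j (x : S), x ∈ ι i → x ∈ ι j → i = j := by
    intro i j x hi hj
    by_contra h
    have hd := minimal_disjoint (hmin i) (hmin j) (fun hh => h (hinj hh))
    have : x ∈ ι i ∩ ι j := ⟨hi, hj⟩
    rw [hd] at this
    exact this
  have key1 : ∀ I : {I : Set S // IsNontrivialLeftIdeal S I},
      (Finset.univ.filter (fun i => ι i ⊆ I.1)).Nonempty ∧
        (Finset.univ.filter (fun i => ι i ⊆ I.1)) ≠ Finset.univ := by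
    intro I
    constructor
    · obtain ⟨x, hx⟩ := I.2.1.1
      obtain ⟨i, hi⟩ := hcover x
      have hsub : ι i ⊆ I.1 := minimal_absorb (hmin i) I.2.1 ⟨x, hi, hx⟩
      exact ⟨i, Finset.mem_filter.mpr ⟨Finset.mem_univ i, hsub⟩⟩
    · intro h
      apply I.2.2
      rw [Set.eq_univ_iff_forall]
      intro x
      obtain ⟨i, hi⟩ := hcover x
      have : i ∈ Finset.univ.filter (fun i => ι i ⊆ I.1) := by
        rw [h]; exact Finset.mem_univ i
      exact (Finset.mem_filter.mp this).2 hi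
  have key2 : ∀ A : KV n, IsNontrivialLeftIdeal S (⋃ i ∈ A.1, ι i) := by
    intro A
    refine ⟨⟨?_, ?_⟩, ?_⟩
    · obtain ⟨i, hi⟩ := A.2.1
      obtain ⟨x, hx⟩ := (hmin i).1.1.1
      exact ⟨x, Set.mem_biUnion hi hx⟩
    · intro s x hx
      simp only [Set.mem_iUnion] at hx ⊢
      obtain ⟨i, hi, hxi⟩ := hx
      exact ⟨i, hi, (hmin i).1.1.2 s x hxi⟩
    · have : ∃ j, j ∉ A.1 := by
        by_contra h
        push_neg at h
        exact A.2.2 (Finset.eq_univ_iff_forall.mpr h)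
      obtain ⟨j, hj⟩ := this
      obtain ⟨y, hy⟩ := (hmin j).1.1.1
      intro h
      have : y ∈ ⋃ i ∈ A.1, ι i := h ▸ Set.mem_univ y
      simp only [Set.mem_iUnion] at this
      obtain ⟨i, hi, hyi⟩ := this
      exact hj ((huniq i j y hyi hy) ▸ hi)
  let toA : {I : Set S // IsNontrivialLeftIdeal S I} → KV n := fun I =>
    ⟨Finset.univ.filter (fun i => ι i ⊆ I.1), key1 I⟩
  let toI : KV n → {I : Set S // IsNontrivialLeftIdeal S I} := fun A =>
    ⟨⋃ i ∈ A.1, ι i, key2 A⟩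
  have hAI : ∀ I, toI (toA I) = I := by
    intro I
    apply Subtype.ext
    apply Set.eq_of_subset_of_subset
    · intro x hx
      simp only [toI, toA, Set.mem_iUnion, Finset.mem_filter] at hx
      obtain ⟨i, ⟨-, hsub⟩, hxi⟩ := hx
      exact hsub hxi
    · intro x hx
      obtain ⟨i, hi⟩ := hcover x
      have hsub : ι i ⊆ I.1 := minimal_absorb (hmin i) I.2.1 ⟨x, hi, hx⟩
      simp only [toI, toA, Set.mem_iUnion, Finset.mem_filter]
      exact ⟨i, ⟨Finset.mem_univ i, hsub⟩, hi⟩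
  have hIA : ∀ A, toA (toI A) = A := by
    intro A
    apply Subtype.ext
    ext i
    simp only [toA, toI, Finset.mem_filter, Finset.mem_univ, true_and]
    constructor
    · intro hsub
      obtain ⟨x, hx⟩ := (hmin i).1.1.1
      have := hsub hx
      simp only [Set.mem_iUnion] at this
      obtain ⟨j, hj, hxj⟩ := this
      exact (huniq i j x hx hxj) ▸ hj
    · intro hiA x hx
      exact Set.mem_biUnion hiA hx
  have toAinj : Function.Injective toA := by
    intro I J h
    rw [← hAI I, ← hAI J, h]
  refine ⟨⟨⟨toA, toI, hAI, hIA⟩, ?_⟩⟩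
  intro I J
  show (KG n).Adj (toA I) (toA J) ↔ (idealGraph S).Adj I J
  constructor
  · rintro ⟨h1, i, hi⟩
    rw [Finset.mem_inter] at hi
    simp only [toA, Finset.mem_filter] at hi
    obtain ⟨x, hx⟩ := (hmin i).1.1.1
    exact ⟨fun h => h1 (congrArg toA h), ⟨x, hi.1.2 hx, hi.2.2 hx⟩⟩
  · rintro ⟨h1, x, hx⟩
    obtain ⟨i, hi⟩ := hcover x
    refine ⟨fun h => h1 (toAinj h), ⟨i, Finset.mem_inter.mpr ⟨?_, ?_⟩⟩⟩
    · simp only [toA, Finset.mem_filter]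
      exact ⟨Finset.mem_univ i, minimal_absorb (hmin i) I.2.1 ⟨x, hi, hx.1⟩⟩
    · simp only [toA, Finset.mem_filter]
      exact ⟨Finset.mem_univ i, minimal_absorb (hmin i) J.2.1 ⟨x, hi, hx.2⟩⟩

end Semigroup

end IdealGraphAut

open IdealGraphAut

/-- If `S` is the union of its `n` minimal left ideals (`2 ≤ n < ∞`), then the
automorphism group of `Γ(S)` is isomorphic to the symmetric group of degree `n`;
in particular it has order `n!`. -/
theorem aut_idealGraph_iso_symmGroup (S : Type*) [Semigroup S] (n : ℕ) (hn : 2 ≤ n)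
    (hcard : {I : Set S | IsMinimalLeftIdeal S I}.encard = n)
    (hunion : ⋃₀ {I : Set S | IsMinimalLeftIdeal S I} = Set.univ) :
    Nonempty (((idealGraph S) ≃g (idealGraph S)) ≃* Equiv.Perm (Fin n)) ∧
      Nat.card ((idealGraph S) ≃g (idealGraph S)) = n.factorial := by
  classical
  have hfin : {I : Set S | IsMinimalLeftIdeal S I}.Finite :=
    Set.finite_of_encard_eq_coe hcard
  haveI := hfin.fintype
  have hc : Fintype.card {I : Set S | IsMinimalLeftIdeal S I} = n := by
    have h := hcard
    rw [Set.encard_eq_coe_toFinset_card, Set.toFinset_card] at h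
    exact_mod_cast h
  let μ := (Fintype.equivFinOfCardEq hc).symm
  let ι : Fin n → Set S := fun i => (μ i).1
  have hmin : ∀ i, IsMinimalLeftIdeal S (ι i) := fun i => (μ i).2
  have hinj : Function.Injective ι := fun i j h => μ.injective (Subtype.ext h)
  have hcover : ∀ x : S, ∃ i, x ∈ ι i := by
    intro x
    have hx : x ∈ ⋃₀ {I : Set S | IsMinimalLeftIdeal S I} := hunion ▸ Set.mem_univ x
    obtain ⟨I, hI, hxI⟩ := hx
    refine ⟨μ.symm ⟨I, hI⟩, ?_⟩
    show x ∈ (μ (μ.symm ⟨I, hI⟩)).1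
    rw [Equiv.apply_symm_apply]
    exact hxI
  obtain ⟨e⟩ := graph_iso ι hmin hinj hcover
  let F : Equiv.Perm (Fin n) → ((idealGraph S) ≃g (idealGraph S)) :=
    fun σ => (e.trans (vIso σ)).trans e.symm
  have hFv : ∀ σ v, F σ v = e.symm (vmap σ (e v)) := fun _ _ => rfl
  have hmul : ∀ σ τ, F (σ * τ) = F σ * F τ := by
    intro σ τ
    show F (σ * τ) = (F τ).trans (F σ)
    refine DFunLike.ext _ _ fun v => ?_
    show F (σ * τ) v = F σ (F τ v)
    rw [hFv, hFv, hFv, RelIso.apply_symm_apply, vmap_vmap]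
  have hFinj : Function.Injective F := by
    intro σ τ h
    apply Equiv.ext
    intro i
    have h2 : ∀ w : KV n, vmap σ w = vmap τ w := by
      intro w
      have h1 := congrArg (fun f : (idealGraph S) ≃g (idealGraph S) => f (e.symm w)) h
      simp only [hFv] at h1
      rw [RelIso.apply_symm_apply] at h1
      have h3 := congrArg e h1
      rw [RelIso.apply_symm_apply, RelIso.apply_symm_apply] at h3
      exact h3
    have h4 := congrArg Subtype.val (h2 (sv hn i))
    simp only [vmap, sv, Finset.image_singleton] at h4
    exact Finset.singleton_inj.mp h4
  have hFsurj : Function.Surjective F := by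
    intro f
    obtain ⟨σ, hσ⟩ := exists_perm hn ((e.symm.trans f).trans e)
    refine ⟨σ, ?_⟩
    refine DFunLike.ext _ _ fun v => ?_
    rw [hFv]
    have h5 : vmap σ (e v) = ((e.symm.trans f).trans e) (e v) := by
      apply Subtype.ext
      rw [hσ (e v)]
      rfl
    rw [h5]
    show e.symm (e (f (e.symm (e v)))) = f v
    rw [RelIso.symm_apply_apply, RelIso.symm_apply_apply]
  let Fhom : Equiv.Perm (Fin n) →* ((idealGraph S) ≃g (idealGraph S)) :=
    MonoidHom.mk' F hmul
  have hbij : Function.Bijective Fhom := ⟨hFinj, hFsurj⟩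
  let ME := MulEquiv.ofBijective Fhom hbij
  constructor
  · exact ⟨ME.symm⟩
  · have h6 : Nat.card ((idealGraph S) ≃g (idealGraph S)) = Nat.card (Equiv.Perm (Fin n)) :=
      Nat.card_congr ME.toEquiv.symm
    rw [h6, Nat.card_eq_fintype_card, Fintype.card_perm, Fintype.card_fin]
end
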